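/- For every k ≥ 3, any graph H obtained from G_k by pasting a distinct clique of order at least 3 onto each heavy edge is Hamiltonian but not cycle extendible. -/

import Mathlib

def Gk (k : ℕ) : SimpleGraph (Fin (3 * k + 1)) where
  Adj a b := a ≠ b ∧ (a.val < k ∨ b.val < k ∨ a.val + 1 = b.val ∨ b.val + 1 = a.val)
  symm := ⟨by rintro a b ⟨h1, h2⟩; exact ⟨h1.symm, by tauto⟩⟩
  loopless := ⟨by rintro a ⟨h, _⟩; exact h rfl⟩

def xv (k : ℕ) (i : Fin k) : Fin (3 * k + 1) := ⟨i.val, by have := i.isLt; omega⟩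
def uv (k : ℕ) (i : Fin k) : Fin (3 * k + 1) := ⟨k + i.val, by have := i.isLt; omega⟩
def zv (k : ℕ) : Fin (3 * k + 1) := ⟨2 * k, by omega⟩
def vv (k : ℕ) (i : Fin k) : Fin (3 * k + 1) := ⟨3 * k - i.val, by omega⟩

/-- Index type for the heavy edges of `G_k`: `inl i` is the edge `x_{i+1}u_{i+1}`,
`inr i` is the edge `x_{i+1}v_{i+1}` (`i + 1 ≤ k - 1`). -/
abbrev HeavyIdx (k : ℕ) := Fin k ⊕ Fin (k - 1)

/-- The endpoints of a heavy edge of `G_k`. -/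
def heavyEnds (k : ℕ) : HeavyIdx k → Fin (3 * k + 1) × Fin (3 * k + 1)
  | .inl i => (xv k i, uv k i)
  | .inr i => (xv k (i.castLE (Nat.sub_le k 1)), vv k (i.castLE (Nat.sub_le k 1)))

/-- The graph obtained from `G_k` by pasting a (distinct) clique onto each heavy
edge.  `W` is the set of new vertices; the new vertex `w` belongs to the clique
pasted onto the heavy edge `f w`.  Each new vertex is adjacent to the other new
vertices of its own clique and to the two ends of its heavy edge, and to nothing
else.  When `f` is surjective, every pasted clique has order at least 3. -/
def pastedGk (k : ℕ) {W : Type*} (f : W → HeavyIdx k) :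
    SimpleGraph (Fin (3 * k + 1) ⊕ W) where
  Adj a b :=
    match a, b with
    | .inl a, .inl b => (Gk k).Adj a b
    | .inl a, .inr w => a = (heavyEnds k (f w)).1 ∨ a = (heavyEnds k (f w)).2
    | .inr w, .inl a => a = (heavyEnds k (f w)).1 ∨ a = (heavyEnds k (f w)).2
    | .inr w, .inr w' => w ≠ w' ∧ f w = f w'
  symm := ⟨by
    rintro (a | w) (b | w') h
    · exact (Gk k).adj_symm h
    · exact h
    · exact h
    · exact ⟨h.1.symm, h.2.symm⟩⟩
  loopless := ⟨by
    rintro (a | w) h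
    · exact (Gk k).irrefl h
    · exact h.1 rfl⟩

/-- A graph is cycle extendible if every non-spanning cycle `C` extends to a cycle
`C'` with `V(C) ⊂ V(C')` and `|V(C')| = |V(C)| + 1`. -/
def CycleExtendible {V : Type*} [Fintype V] [DecidableEq V] (G : SimpleGraph V) : Prop :=
  ∀ (a : V) (c : G.Walk a a), c.IsCycle → c.support.toFinset ≠ Finset.univ →
    ∃ (b : V) (c' : G.Walk b b), c'.IsCycle ∧ c.support.toFinset ⊂ c'.support.toFinset ∧
      c'.support.toFinset.card = c.support.toFinset.card + 1

set_option linter.unusedSectionVars false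
open SimpleGraph List

namespace CEaux
variable {V : Type*} {G : SimpleGraph V}

/-- A walk realizing a chain list. -/
lemma exists_walk_of_chain : ∀ (l : List V) (a b : V), List.Chain G.Adj a l →
    (a :: l).getLast (by simp) = b → ∃ w : G.Walk a b, w.support = a :: l := by
  intro l
  induction l with
  | nil => intro a b _ hb; simp at hb; subst hb; exact ⟨Walk.nil, rfl⟩
  | cons c l ih =>
    intro a b hch hb
    rw [List.Chain, List.isChain_cons_cons] at hch
    obtain ⟨w, hw⟩ := ih c b hch.2 (by simpa using hb)
    exact ⟨Walk.cons hch.1 w, by simp [hw]⟩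

lemma second_of_edge {u v x : V} (p : G.Walk u v) (hnd : p.support.Nodup)
    (he : s(u, x) ∈ p.edges) : p.support.tail.head? = some x := by
  cases p with
  | nil => simp at he
  | cons h q =>
    rename_i w
    simp only [Walk.edges_cons, List.mem_cons] at he
    rcases he with he | he
    · rw [Sym2.eq_iff] at he
      rcases he with ⟨-, rfl⟩ | ⟨rfl, rfl⟩
      · simp only [Walk.support_cons, List.tail_cons]
        rw [q.support_eq_cons]; rfl
      · exact absurd rfl h.ne
    · exfalso
      have : u ∈ q.support := Walk.fst_mem_support_of_mem_edges q he
      simp only [Walk.support_cons, List.nodup_cons] at hnd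
      exact hnd.1 this

/-- Build a cycle from a closed chain list `a :: l ++ [a]`. -/
lemma exists_cycle_of_chain (a : V) (l : List V) (hch : List.Chain G.Adj a (l ++ [a]))
    (hnd : (a :: l).Nodup) (hl : 2 ≤ l.length) :
    ∃ w : G.Walk a a, w.IsCycle ∧ w.support = a :: (l ++ [a]) := by
  obtain ⟨b, l', rfl⟩ : ∃ b l', l = b :: l' := by
    cases l with
    | nil => simp at hl
    | cons b l' => exact ⟨_, _, rfl⟩
  rw [List.cons_append, List.Chain, List.isChain_cons_cons] at hch
  obtain ⟨w, hw⟩ := exists_walk_of_chain (l' ++ [a]) b a hch.2 (by simp)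
  simp only [List.nodup_cons, List.mem_cons] at hnd
  have hab : a ≠ b := fun h => hnd.1 (Or.inl h)
  have hal : a ∉ l' := fun h => hnd.1 (Or.inr h)
  have hbl : b ∉ l' := hnd.2.1
  have hl'n : l'.Nodup := hnd.2.2
  have hnd' : (b :: (l' ++ [a])).Nodup := by
    rw [List.nodup_cons, List.nodup_append]
    refine ⟨?_, hl'n, by simp, ?_⟩
    · simp only [List.mem_append, List.mem_singleton]
      rintro (h | rfl)
      · exact hbl h
      · exact hab rfl
    · intro x hx
      simp only [List.mem_singleton, forall_eq, forall_eq']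
      rintro rfl
      exact hal hx
  refine ⟨Walk.cons hch.1 w, ?_, by simp [hw]⟩
  rw [Walk.cons_isCycle_iff]
  constructor
  · rw [Walk.isPath_def, hw]; exact hnd'
  · intro hmem
    have h2 := second_of_edge w (by rw [hw]; exact hnd') (by rwa [Sym2.eq_swap])
    rw [hw] at h2
    cases l' with
    | nil => simp at hl
    | cons c l'' =>
      simp only [List.cons_append, List.tail_cons, List.head?_cons, Option.some.injEq] at h2
      subst h2
      exact hal List.mem_cons_self

variable [DecidableEq V]

lemma tail_ne_nil_of_not_nil {u v : V} (q : G.Walk u v) (hq : ¬ q.Nil) :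
    q.support.tail ≠ [] := by
  cases q with
  | nil => exact absurd Walk.nil_nil hq
  | cons h p => simp

lemma getLast?_tail_of_closed {u : V} (q : G.Walk u u) (hq : ¬ q.Nil) :
    q.support.tail.getLast? = some u := by
  have h1 : q.support.getLast? = some u := by
    rw [List.getLast?_eq_getLast_of_ne_nil (by simp), q.getLast_support]
  have h2 := tail_ne_nil_of_not_nil q hq
  rw [q.support_eq_cons] at h1
  obtain ⟨c, t, ht⟩ : ∃ c t, q.support.tail = c :: t := by
    cases hc : q.support.tail with
    | nil => exact absurd hc h2
    | cons c t => exact ⟨_, _, rfl⟩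
  rw [ht] at h1 ⊢
  rwa [List.getLast?_cons_cons] at h1

lemma mem_tail_of_closed {u : V} (q : G.Walk u u) (hq : ¬ q.Nil) {z : V}
    (hz : z ∈ q.support) : z ∈ q.support.tail := by
  rw [q.support_eq_cons] at hz
  rcases List.mem_cons.1 hz with rfl | h
  · exact List.mem_of_getLast? (getLast?_tail_of_closed q hq)
  · exact h

lemma mem_dropLast_of_closed {u : V} (q : G.Walk u u) (hq : ¬ q.Nil) {z : V}
    (hz : z ∈ q.support) : z ∈ q.support.dropLast := by
  have hne : q.support ≠ [] := q.support_ne_nil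
  have h2 := tail_ne_nil_of_not_nil q hq
  have hdl : q.support.dropLast = u :: q.support.tail.dropLast := by
    conv_lhs => rw [q.support_eq_cons]
    rw [List.dropLast_cons_of_ne_nil h2]
  rcases List.mem_cons.1 (by rw [q.support_eq_cons] at hz; exact hz) with rfl | h
  · rw [hdl]; exact List.mem_cons_self
  · by_cases hzu : z = u
    · rw [hdl, hzu]; exact List.mem_cons_self
    · have := List.dropLast_append_getLast h2
      have hz' : z ∈ q.support.tail.dropLast ++ [q.support.tail.getLast h2] := by
        rw [this]; exact h
      rcases List.mem_append.1 hz' with h' | h'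
      · rw [hdl]; exact List.mem_cons_of_mem _ h'
      · exfalso
        simp only [List.mem_singleton] at h'
        have := getLast?_tail_of_closed q hq
        rw [List.getLast?_eq_getLast_of_ne_nil h2, Option.some_inj] at this
        exact hzu (h' ▸ this)

lemma exists_out_dart {u : V} (q : G.Walk u u) (hq : ¬ q.Nil) {z : V} (hz : z ∈ q.support) :
    ∃ d ∈ q.darts, d.fst = z := by
  have := mem_dropLast_of_closed q hq hz
  rw [← Walk.map_fst_darts] at this
  obtain ⟨d, hd, hdz⟩ := List.mem_map.1 this
  exact ⟨d, hd, hdz⟩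

lemma exists_in_dart {u : V} (q : G.Walk u u) (hq : ¬ q.Nil) {z : V} (hz : z ∈ q.support) :
    ∃ d ∈ q.darts, d.snd = z := by
  have := mem_tail_of_closed q hq hz
  rw [← Walk.map_snd_darts] at this
  obtain ⟨d, hd, hdz⟩ := List.mem_map.1 this
  exact ⟨d, hd, hdz⟩

lemma IsCycleAux.dropLast_nodup {u : V} {q : G.Walk u u} (hq : q.IsCycle) :
    q.support.dropLast.Nodup := by
  have h2 := tail_ne_nil_of_not_nil q hq.not_nil
  have htail : q.support.tail.Nodup := hq.support_nodup
  have hdl : q.support.dropLast = u :: q.support.tail.dropLast := by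
    conv_lhs => rw [q.support_eq_cons]
    rw [List.dropLast_cons_of_ne_nil h2]
  rw [hdl, List.nodup_cons]
  constructor
  · intro hu
    have hsplit := List.dropLast_append_getLast h2
    have hlast : q.support.tail.getLast h2 = u := by
      have := getLast?_tail_of_closed q hq.not_nil
      rwa [List.getLast?_eq_getLast_of_ne_nil h2, Option.some_inj] at this
    have : ¬ q.support.tail.Nodup := by
      rw [← hsplit]
      intro hn
      rw [List.nodup_append] at hn
      exact hn.2.2 _ hu _ (by rw [hlast]; simp) rfl
    exact this htail
  · exact htail.sublist (List.dropLast_sublist _)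

lemma out_dart_inj {u : V} {q : G.Walk u u} (hq : q.IsCycle) {d1 d2 : G.Dart}
    (h1 : d1 ∈ q.darts) (h2 : d2 ∈ q.darts) (h : d1.fst = d2.fst) : d1 = d2 := by
  have hnd : (q.darts.map (·.fst)).Nodup := by
    rw [Walk.map_fst_darts]; exact IsCycleAux.dropLast_nodup hq
  exact List.inj_on_of_nodup_map hnd h1 h2 h

lemma in_dart_inj {u : V} {q : G.Walk u u} (hq : q.IsCycle) {d1 d2 : G.Dart}
    (h1 : d1 ∈ q.darts) (h2 : d2 ∈ q.darts) (h : d1.snd = d2.snd) : d1 = d2 := by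
  have hnd : (q.darts.map (·.snd)).Nodup := by
    rw [Walk.map_snd_darts]; exact hq.support_nodup
  exact List.inj_on_of_nodup_map hnd h1 h2 h

lemma dart_edge_inj {u : V} {q : G.Walk u u} (hq : q.IsCycle) {d1 d2 : G.Dart}
    (h1 : d1 ∈ q.darts) (h2 : d2 ∈ q.darts) (h : d1.edge = d2.edge) : d1 = d2 := by
  have hnd : (q.darts.map Dart.edge).Nodup := hq.isTrail.edges_nodup
  exact List.inj_on_of_nodup_map hnd h1 h2 h

lemma exists_cross_walk (B : Set V) : ∀ {u v : V} (p : G.Walk u v), u ∈ B → v ∉ B →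
    ∃ d ∈ p.darts, d.fst ∈ B ∧ d.snd ∉ B := by
  intro u v p
  induction p with
  | nil => intro h1 h2; exact absurd h1 h2
  | @cons a b c h q ih =>
    intro h1 h2
    by_cases hb : b ∈ B
    · obtain ⟨d, hd, hdp⟩ := ih hb h2
      exact ⟨d, by simp [hd], hdp⟩
    · exact ⟨⟨(a, b), h⟩, by simp, h1, hb⟩

/-- In a cycle, any set containing a support vertex and missing another has crossing
darts in both directions, with distinct edges. -/
lemma cycle_two_cross {v : V} {c : G.Walk v v} (hc : c.IsCycle) (B : Set V) {x y : V}
    (hx : x ∈ c.support) (hy : y ∈ c.support) (hxB : x ∈ B) (hyB : y ∉ B) :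
    ∃ d1 ∈ c.darts, ∃ d2 ∈ c.darts, (d1.fst ∈ B ∧ d1.snd ∉ B) ∧ (d2.fst ∉ B ∧ d2.snd ∈ B) ∧
      d1.edge ≠ d2.edge := by
  classical
  have hdperm : (c.rotate x hx).darts ~ c.darts := (Walk.rotate_darts c x hx).perm
  have hy' : y ∈ (c.rotate x hx).support := by
    have h1 : y ∈ c.support.tail := mem_tail_of_closed c hc.not_nil hy
    have h2 : (c.rotate x hx).support.tail ~ c.support.tail := (Walk.support_rotate c x hx).perm
    exact List.mem_of_mem_tail (h2.mem_iff.2 h1)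
  obtain ⟨d1, hd1, hd1p⟩ := exists_cross_walk B ((c.rotate x hx).takeUntil y hy') hxB hyB
  obtain ⟨d2, hd2, hd2p⟩ :=
    exists_cross_walk Bᶜ ((c.rotate x hx).dropUntil y hy') hyB (by simpa using hxB)
  have key : ((c.rotate x hx).takeUntil y hy').darts ++ ((c.rotate x hx).dropUntil y hy').darts
      = (c.rotate x hx).darts := by
    rw [← Walk.darts_append, Walk.take_spec]
  have hsub : ∀ d ∈ ((c.rotate x hx).takeUntil y hy').darts, d ∈ c.darts := fun d hd =>
    hdperm.mem_iff.1 (key ▸ List.mem_append.2 (Or.inl hd))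
  have hsub2 : ∀ d ∈ ((c.rotate x hx).dropUntil y hy').darts, d ∈ c.darts := fun d hd =>
    hdperm.mem_iff.1 (key ▸ List.mem_append.2 (Or.inr hd))
  refine ⟨d1, hsub d1 hd1, d2, hsub2 d2 hd2, hd1p, by simpa using hd2p, ?_⟩
  intro hedge
  have : d1 = d2 := dart_edge_inj hc (hsub d1 hd1) (hsub2 d2 hd2) hedge
  rw [this] at hd1p
  exact (by simpa using hd2p : d2.fst ∉ B ∧ d2.snd ∈ B).1 hd1p.1

/-- CUT lemma: a cycle cannot have a "closed" proper nonempty vertex set. -/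
lemma cycle_no_closed_set {v : V} {c : G.Walk v v} (hc : c.IsCycle) (B : Set V) {x y : V}
    (hx : x ∈ c.support) (hy : y ∈ c.support) (hxB : x ∈ B) (hyB : y ∉ B)
    (hclosed : ∀ d ∈ c.darts, d.fst ∈ B → d.snd ∈ B) : False := by
  obtain ⟨d1, hd1, -, -, ⟨h1, h2⟩, -, -⟩ := cycle_two_cross hc B hx hy hxB hyB
  exact h2 (hclosed d1 hd1 h1)

/-- PIN lemma: if a vertex of a cycle has darts into two "disjoint sides", then all its
darts go into these sides. -/
lemma pin_darts {u : V} {q : G.Walk u u} (hq : q.IsCycle) {a : V} {S1 S2 : Set V}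
    {d1 d2 : G.Dart} (hd1 : d1 ∈ q.darts) (hd2 : d2 ∈ q.darts)
    (h1 : (d1.fst = a ∧ d1.snd ∈ S1) ∨ (d1.snd = a ∧ d1.fst ∈ S1))
    (h2 : (d2.fst = a ∧ d2.snd ∈ S2) ∨ (d2.snd = a ∧ d2.fst ∈ S2))
    (hdisj : ∀ t, t ∈ S1 → t ∈ S2 → False) :
    ∀ d ∈ q.darts, (d.fst = a → d.snd ∈ S1 ∪ S2) ∧ (d.snd = a → d.fst ∈ S1 ∪ S2) := by
  intro d hd
  constructor
  · intro hfst
    rcases h1 with ⟨he, hs⟩ | ⟨he, hs⟩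
    · have : d = d1 := out_dart_inj hq hd hd1 (by rw [hfst, he])
      rw [this]; exact Or.inl hs
    · rcases h2 with ⟨he2, hs2⟩ | ⟨he2, hs2⟩
      · have : d = d2 := out_dart_inj hq hd hd2 (by rw [hfst, he2])
        rw [this]; exact Or.inr hs2
      · exfalso
        have : d1 = d2 := in_dart_inj hq hd1 hd2 (by rw [he, he2])
        exact hdisj d1.fst hs (this ▸ hs2)
  · intro hsnd
    rcases h1 with ⟨he, hs⟩ | ⟨he, hs⟩
    · rcases h2 with ⟨he2, hs2⟩ | ⟨he2, hs2⟩
      · exfalso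
        have : d1 = d2 := out_dart_inj hq hd1 hd2 (by rw [he, he2])
        exact hdisj d1.snd hs (this ▸ hs2)
      · have : d = d2 := in_dart_inj hq hd hd2 (by rw [hsnd, he2])
        rw [this]; exact Or.inr hs2
    · have : d = d1 := in_dart_inj hq hd hd1 (by rw [hsnd, he])
      rw [this]; exact Or.inl hs

end CEaux
section Part2
variable {k : ℕ} {W : Type*} [Fintype W] [DecidableEq W]

/-- vertex from a natural number -/
def vV (k : ℕ) (W : Type*) (m : ℕ) : Fin (3*k+1) ⊕ W := Sum.inl ⟨m % (3*k+1), Nat.mod_lt _ (by omega)⟩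

lemma vV_val (m : ℕ) (hm : m ≤ 3*k) : ∀ h, (vV k W m) = Sum.inl ⟨m, h⟩ := by
  intro h; unfold vV; congr 1; exact Fin.ext (by simp; omega)

lemma vV_inj {m m' : ℕ} (hm : m ≤ 3*k) (hm' : m' ≤ 3*k) (h : vV k W m = vV k W m') :
    m = m' := by
  unfold vV at h
  have := Fin.val_eq_of_eq (Sum.inl.inj h)
  simpa [Nat.mod_eq_of_lt (by omega : m < 3*k+1), Nat.mod_eq_of_lt (by omega : m' < 3*k+1)] using this

/-- heavy edge indices from naturals -/
def eU (k : ℕ) (h3 : 3 ≤ k) (i : ℕ) : HeavyIdx k := Sum.inl ⟨i % k, Nat.mod_lt _ (by omega)⟩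
def eV (k : ℕ) (h3 : 3 ≤ k) (i : ℕ) : HeavyIdx k := Sum.inr ⟨i % (k-1), Nat.mod_lt _ (by omega)⟩

lemma eU_inj (h3 : 3 ≤ k) {i j : ℕ} (hi : i < k) (hj : j < k) (h : eU k h3 i = eU k h3 j) :
    i = j := by
  unfold eU at h
  have := Fin.val_eq_of_eq (Sum.inl.inj h)
  simpa [Nat.mod_eq_of_lt hi, Nat.mod_eq_of_lt hj] using this

lemma eV_inj (h3 : 3 ≤ k) {i j : ℕ} (hi : i < k-1) (hj : j < k-1) (h : eV k h3 i = eV k h3 j) :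
    i = j := by
  unfold eV at h
  have := Fin.val_eq_of_eq (Sum.inr.inj h)
  simpa [Nat.mod_eq_of_lt hi, Nat.mod_eq_of_lt hj] using this

lemma eU_ne_eV (h3 : 3 ≤ k) (i j : ℕ) : eU k h3 i ≠ eV k h3 j := by
  simp [eU, eV]

lemma ends_eU (h3 : 3 ≤ k) (i : ℕ) (hi : i < k) :
    ((heavyEnds k (eU k h3 i)).1 : Fin (3*k+1)).val = i ∧
    ((heavyEnds k (eU k h3 i)).2 : Fin (3*k+1)).val = k + i := by
  unfold eU heavyEnds xv uv
  simp [Nat.mod_eq_of_lt hi]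

lemma ends_eV (h3 : 3 ≤ k) (i : ℕ) (hi : i < k-1) :
    ((heavyEnds k (eV k h3 i)).1 : Fin (3*k+1)).val = i ∧
    ((heavyEnds k (eV k h3 i)).2 : Fin (3*k+1)).val = 3*k - i := by
  unfold eV heavyEnds xv vv
  simp [Nat.mod_eq_of_lt hi]

/-- the pasted vertices of a clique, as a list -/
noncomputable def flist (k : ℕ) (f : W → HeavyIdx k) (e : HeavyIdx k) : List (Fin (3*k+1) ⊕ W) :=
  ((Finset.univ.filter (fun w => f w = e)).toList).map Sum.inr

lemma mem_flist {f : W → HeavyIdx k} {e : HeavyIdx k} {x : Fin (3*k+1) ⊕ W} :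
    x ∈ flist k f e ↔ ∃ w, x = Sum.inr w ∧ f w = e := by
  simp only [flist, List.mem_map, Finset.mem_toList, Finset.mem_filter, Finset.mem_univ, true_and]
  constructor
  · rintro ⟨w, hw, rfl⟩; exact ⟨w, rfl, hw⟩
  · rintro ⟨w, rfl, hw⟩; exact ⟨w, hw, rfl⟩

lemma flist_nodup (f : W → HeavyIdx k) (e : HeavyIdx k) : (flist k f e).Nodup :=
  ((Finset.nodup_toList _).map Sum.inr_injective)

lemma flist_length (f : W → HeavyIdx k) (e : HeavyIdx k) :
    (flist k f e).length = (Finset.univ.filter (fun w => f w = e)).card := by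
  simp [flist]

lemma flist_ne_nil {f : W → HeavyIdx k} {e : HeavyIdx k} (he : ∃ w, f w = e) :
    flist k f e ≠ [] := by
  obtain ⟨w, hw⟩ := he
  have : Sum.inr w ∈ flist k f e := mem_flist.2 ⟨w, rfl, hw⟩
  exact List.ne_nil_of_mem this

lemma adj_end_flist {f : W → HeavyIdx k} {e : HeavyIdx k} {a : Fin (3*k+1)}
    (ha : a = (heavyEnds k e).1 ∨ a = (heavyEnds k e).2) {x : Fin (3*k+1) ⊕ W}
    (hx : x ∈ flist k f e) :
    (pastedGk k f).Adj (Sum.inl a) x ∧ (pastedGk k f).Adj x (Sum.inl a) := by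
  obtain ⟨w, rfl, hw⟩ := mem_flist.1 hx
  have : (pastedGk k f).Adj (Sum.inl a) (Sum.inr w) := by
    show a = (heavyEnds k (f w)).1 ∨ a = (heavyEnds k (f w)).2
    rw [hw]; exact ha
  exact ⟨this, this.symm⟩

lemma flist_chain' (f : W → HeavyIdx k) (e : HeavyIdx k) :
    (flist k f e).Chain' (pastedGk k f).Adj := by
  apply List.Pairwise.isChain
  have hnd := flist_nodup f e
  have : ∀ x ∈ flist k f e, ∀ y ∈ flist k f e, x ≠ y → (pastedGk k f).Adj x y := by
    intro x hx y hy hxy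
    obtain ⟨w, rfl, hw⟩ := mem_flist.1 hx
    obtain ⟨w', rfl, hw'⟩ := mem_flist.1 hy
    show w ≠ w' ∧ f w = f w'
    exact ⟨fun h => hxy (by rw [h]), by rw [hw, hw']⟩
  exact List.Pairwise.imp_of_mem (fun hx hy h => this _ hx _ hy h)
    (List.Nodup.pairwise_of_forall_ne hnd (fun x hx y hy hxy => hxy) |>.imp id)
end Part2
section Part3
variable {k : ℕ} {W : Type*} [Fintype W] [DecidableEq W]

lemma chain'_bridge {V : Type*} {R : V → V → Prop} (a b : V) (l : List V)
    (hl : l.Chain' R) (hal : ∀ x ∈ l, R a x) (hlb : ∀ x ∈ l, R x b) (hab : R a b) :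
    (a :: (l ++ [b])).Chain' R := by
  rw [List.Chain', List.isChain_cons]
  refine ⟨?_, ?_⟩
  · intro y hy
    cases l with
    | nil => simp at hy; subst hy; exact hab
    | cons c t => simp at hy; subst hy; exact hal c (by simp)
  · rw [List.isChain_append]
    refine ⟨hl, by simp, ?_⟩
    intro x hx y hy
    simp at hy; subst hy
    exact hlb x (List.mem_of_mem_getLast? hx)

variable (h3 : 3 ≤ k) (f : W → HeavyIdx k)

/-- a segment of the cycle: `u_i, clique(x_i u_i), x_i, clique(x_i v_i), v_i` -/
noncomputable def segU (i : ℕ) : List (Fin (3*k+1) ⊕ W) :=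
  vV k W (k+i) :: ((flist k f (eU k h3 i) ++ vV k W i :: flist k f (eV k h3 i)) ++ [vV k W (3*k-i)])

/-- parity of segment orientation -/
def bpar (k : ℕ) (c : Bool) (i : ℕ) : Bool := (decide ((i+k) % 2 = 0)) == c

lemma bpar_succ (c : Bool) (i : ℕ) : bpar k c (i+1) = !(bpar k c i) := by
  unfold bpar
  rcases Nat.even_or_odd (i + k) with h | h
  · have h1 : (i+k) % 2 = 0 := Nat.even_iff.1 h
    have h2 : ¬((i+1+k) % 2 = 0) := by omega
    simp [h1, h2]
  · have h1 : ¬((i+k) % 2 = 0) := by have := Nat.odd_iff.1 h; omega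
    have h2 : (i+1+k) % 2 = 0 := by have := Nat.odd_iff.1 h; omega
    simp [h1, h2]

noncomputable def segL (c : Bool) (i : ℕ) : List (Fin (3*k+1) ⊕ W) :=
  if bpar k c i then segU h3 f i else (segU h3 f i).reverse

lemma segU_ne_nil (i : ℕ) : segU h3 f i ≠ [] := by simp [segU]

lemma segL_ne_nil (c : Bool) (i : ℕ) : segL h3 f c i ≠ [] := by
  unfold segL; split
  · exact segU_ne_nil h3 f i
  · simp [segU_ne_nil h3 f i]

lemma segU_head? (i : ℕ) : (segU h3 f i).head? = some (vV k W (k+i)) := rfl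

lemma segU_getLast? (i : ℕ) : (segU h3 f i).getLast? = some (vV k W (3*k-i)) := by
  unfold segU
  rw [← List.cons_append, List.getLast?_concat]

/-- entry and exit vertices of oriented segments -/
noncomputable def entryV (c : Bool) (i : ℕ) : Fin (3*k+1) ⊕ W :=
  if bpar k c i then vV k W (k+i) else vV k W (3*k-i)
noncomputable def exitV (c : Bool) (i : ℕ) : Fin (3*k+1) ⊕ W :=
  if bpar k c i then vV k W (3*k-i) else vV k W (k+i)

lemma segL_head? (c : Bool) (i : ℕ) : (segL h3 f c i).head? = some (entryV c i) := by
  unfold segL entryV; split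
  · exact segU_head? h3 f i
  · rw [List.head?_reverse]; exact segU_getLast? h3 f i

lemma segL_getLast? (c : Bool) (i : ℕ) : (segL h3 f c i).getLast? = some (exitV c i) := by
  unfold segL exitV; split
  · exact segU_getLast? h3 f i
  · rw [List.getLast?_reverse]; exact segU_head? h3 f i

lemma mem_segL {c : Bool} {i : ℕ} {x : Fin (3*k+1) ⊕ W} (hx : x ∈ segL h3 f c i) :
    (x = vV k W i ∨ x = vV k W (k+i) ∨ x = vV k W (3*k-i)) ∨
      (∃ w, x = Sum.inr w ∧ (f w = eU k h3 i ∨ f w = eV k h3 i)) := by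
  have hx' : x ∈ segU h3 f i := by
    unfold segL at hx; split at hx
    · exact hx
    · exact List.mem_reverse.1 hx
  unfold segU at hx'
  simp only [List.mem_cons, List.mem_append, List.mem_singleton, List.not_mem_nil, or_false] at hx'
  rcases hx' with rfl | ((h | h) | rfl)
  · exact Or.inl (Or.inr (Or.inl rfl))
  · obtain ⟨w, rfl, hw⟩ := mem_flist.1 h
    exact Or.inr ⟨w, rfl, Or.inl hw⟩
  · rcases h with rfl | h
    · exact Or.inl (Or.inl rfl)
    · obtain ⟨w, rfl, hw⟩ := mem_flist.1 h
      exact Or.inr ⟨w, rfl, Or.inr hw⟩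
  · exact Or.inl (Or.inr (Or.inr rfl))

lemma adj_vV_vV {m m' : ℕ} (hm : m ≤ 3*k) (hm' : m' ≤ 3*k) (hne : m ≠ m')
    (h : m < k ∨ m' < k ∨ m + 1 = m' ∨ m' + 1 = m) :
    (pastedGk k f).Adj (vV k W m) (vV k W m') := by
  show (Gk k).Adj _ _
  constructor
  · intro hc
    exact hne (by simpa [Nat.mod_eq_of_lt (by omega : m < 3*k+1),
      Nat.mod_eq_of_lt (by omega : m' < 3*k+1)] using Fin.val_eq_of_eq hc)
  · simp only []
    rw [Nat.mod_eq_of_lt (by omega : m < 3*k+1), Nat.mod_eq_of_lt (by omega : m' < 3*k+1)]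
    exact h

lemma vV_eq_end1_eU (i : ℕ) (hi : i < k) :
    vV k W i = Sum.inl (heavyEnds k (eU k h3 i)).1 := by
  rw [vV_val i (by omega) (by omega)]
  congr 1
  exact (Fin.ext (ends_eU h3 i hi).1.symm)

lemma vV_eq_end2_eU (i : ℕ) (hi : i < k) :
    vV k W (k+i) = Sum.inl (heavyEnds k (eU k h3 i)).2 := by
  rw [vV_val (k+i) (by omega) (by omega)]
  congr 1
  exact (Fin.ext (ends_eU h3 i hi).2.symm)

lemma vV_eq_end1_eV (i : ℕ) (hi : i < k-1) :
    vV k W i = Sum.inl (heavyEnds k (eV k h3 i)).1 := by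
  rw [vV_val i (by omega) (by omega)]
  congr 1
  exact (Fin.ext (ends_eV h3 i hi).1.symm)

lemma vV_eq_end2_eV (i : ℕ) (hi : i < k-1) :
    vV k W (3*k-i) = Sum.inl (heavyEnds k (eV k h3 i)).2 := by
  rw [vV_val (3*k-i) (by omega) (by omega)]
  congr 1
  exact (Fin.ext (ends_eV h3 i hi).2.symm)

lemma segU_chain' (i : ℕ) (hi : i ≤ k-2) : (segU h3 f i).Chain' (pastedGk k f).Adj := by
  have hik : i < k := by omega
  have hik1 : i < k - 1 := by omega
  unfold segU
  have hsplit : vV k W (k+i) :: ((flist k f (eU k h3 i) ++ vV k W i :: flist k f (eV k h3 i))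
      ++ [vV k W (3*k-i)]) = (vV k W (k+i) :: flist k f (eU k h3 i)) ++
      vV k W i :: (flist k f (eV k h3 i) ++ [vV k W (3*k-i)]) := by
    simp
  rw [hsplit, List.Chain', List.isChain_split]
  constructor
  · apply chain'_bridge _ _ _ (flist_chain' f _)
    · intro x hx
      rw [vV_eq_end2_eU h3 i hik]
      exact (adj_end_flist (Or.inr rfl) hx).1
    · intro x hx
      rw [vV_eq_end1_eU h3 i hik]
      exact (adj_end_flist (Or.inl rfl) hx).2
    · exact adj_vV_vV f (by omega) (by omega) (by omega) (by omega)
  · apply chain'_bridge _ _ _ (flist_chain' f _)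
    · intro x hx
      rw [vV_eq_end1_eV h3 i hik1]
      exact (adj_end_flist (Or.inl rfl) hx).1
    · intro x hx
      rw [vV_eq_end2_eV h3 i hik1]
      exact (adj_end_flist (Or.inr rfl) hx).2
    · exact adj_vV_vV f (by omega) (by omega) (by omega) (by omega)

end Part3
section Part4
variable {k : ℕ} {W : Type*} [Fintype W] [DecidableEq W] (h3 : 3 ≤ k) (f : W → HeavyIdx k)

lemma flip_adj : (flip (pastedGk k f).Adj) = (pastedGk k f).Adj := by
  funext a b
  exact propext ⟨SimpleGraph.Adj.symm, SimpleGraph.Adj.symm⟩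

lemma segL_chain' (c : Bool) (i : ℕ) (hi : i ≤ k-2) :
    (segL h3 f c i).Chain' (pastedGk k f).Adj := by
  unfold segL; split
  · exact segU_chain' h3 f i hi
  · rw [List.Chain', List.isChain_reverse, show (fun a b => (pastedGk k f).Adj b a) = (pastedGk k f).Adj from flip_adj f]
    exact segU_chain' h3 f i hi

lemma segL_nodup (c : Bool) (i : ℕ) (hi : i ≤ k-2) : (segL h3 f c i).Nodup := by
  have hBl2 : (vV k W i :: flist k f (eV k h3 i)).Nodup := by
    rw [List.nodup_cons]
    refine ⟨?_, flist_nodup f _⟩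
    intro h
    obtain ⟨w, hw, -⟩ := mem_flist.1 h
    simp [vV] at hw
  have h12 : (flist k f (eU k h3 i) ++ vV k W i :: flist k f (eV k h3 i)).Nodup := by
    rw [List.nodup_append]
    refine ⟨flist_nodup f _, hBl2, ?_⟩
    rintro x hx _ hmem rfl
    obtain ⟨w, rfl, hw⟩ := mem_flist.1 hx
    rcases List.mem_cons.1 hmem with h | h
    · simp [vV] at h
    · obtain ⟨w', hw', hfw'⟩ := mem_flist.1 h
      obtain rfl : w' = w := Sum.inr_injective hw'.symm
      exact eU_ne_eV h3 i i (hw ▸ hfw' ▸ rfl)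
  have hfull2 : ((flist k f (eU k h3 i) ++ vV k W i :: flist k f (eV k h3 i))
      ++ [vV k W (3*k-i)]).Nodup := by
    rw [List.nodup_append]
    refine ⟨h12, by simp, ?_⟩
    rintro x hx _ hmem rfl
    rcases List.mem_singleton.1 hmem with rfl
    rcases List.mem_append.1 hx with h | h
    · obtain ⟨w, hw, -⟩ := mem_flist.1 h; simp [vV] at hw
    · rcases List.mem_cons.1 h with h | h
      · exact absurd (vV_inj (by omega) (by omega) h) (by omega)
      · obtain ⟨w, hw, -⟩ := mem_flist.1 h; simp [vV] at hw
  have hU : (segU h3 f i).Nodup := by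
    unfold segU
    rw [List.nodup_cons]
    refine ⟨?_, hfull2⟩
    intro hmem
    rcases List.mem_append.1 hmem with h | h
    · rcases List.mem_append.1 h with h | h
      · obtain ⟨w, hw, -⟩ := mem_flist.1 h; simp [vV] at hw
      · rcases List.mem_cons.1 h with h | h
        · exact absurd (vV_inj (by omega) (by omega) h) (by omega)
        · obtain ⟨w, hw, -⟩ := mem_flist.1 h; simp [vV] at hw
    · rcases List.mem_singleton.1 h with h
      exact absurd (vV_inj (by omega) (by omega) h) (by omega)
  unfold segL; split
  · exact hU
  · exact List.nodup_reverse.2 hU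

lemma segL_length (c : Bool) (i : ℕ) :
    (segL h3 f c i).length = 3 + (Finset.univ.filter (fun w => f w = eU k h3 i)).card
      + (Finset.univ.filter (fun w => f w = eV k h3 i)).card := by
  have hU : (segU h3 f i).length = _ := rfl
  have : (segU h3 f i).length = 3 + (Finset.univ.filter (fun w => f w = eU k h3 i)).card
      + (Finset.univ.filter (fun w => f w = eV k h3 i)).card := by
    unfold segU
    simp [flist_length]
    omega
  unfold segL; split
  · exact this
  · rw [List.length_reverse]; exact this

/-- the zig-zag part of the cycle: columns `k-1-m` through `k-2`. -/
noncomputable def buildL (c : Bool) : ℕ → List (Fin (3*k+1) ⊕ W)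
  | 0 => []
  | (m+1) => segL h3 f c (k-1-(m+1)) ++ buildL c m

lemma buildL_head? (c : Bool) (m : ℕ) (hm : 1 ≤ m) :
    (buildL h3 f c m).head? = some (entryV c (k-1-m)) := by
  obtain ⟨m', rfl⟩ : ∃ m', m = m' + 1 := ⟨m - 1, by omega⟩
  show (segL h3 f c (k-1-(m'+1)) ++ buildL h3 f c m').head? = _
  rw [List.head?_append, segL_head?]
  rfl

lemma buildL_getLast? (c : Bool) (m : ℕ) (hm : 1 ≤ m) :
    (buildL h3 f c m).getLast? = some (exitV c (k-2)) := by
  induction m with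
  | zero => omega
  | succ m ih =>
    show (segL h3 f c (k-1-(m+1)) ++ buildL h3 f c m).getLast? = _
    rcases Nat.eq_zero_or_pos m with rfl | hm'
    · show (segL h3 f c (k-1-1) ++ buildL h3 f c 0).getLast? = _
      have : buildL h3 f c 0 = [] := rfl
      rw [this, List.append_nil, segL_getLast?]
      have h12 : k-1-1 = k-2 := by omega
      rw [h12]
    · rw [List.getLast?_append_of_ne_nil]
      · exact ih hm'
      · obtain ⟨m'', rfl⟩ : ∃ m'', m = m'' + 1 := ⟨m - 1, by omega⟩
        show segL h3 f c (k-1-(m''+1)) ++ buildL h3 f c m'' ≠ []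
        simp [segL_ne_nil]

lemma adj_exit_entry (c : Bool) (i : ℕ) (hi : i + 1 ≤ k-2) :
    (pastedGk k f).Adj (exitV c i) (entryV c (i+1)) := by
  unfold exitV entryV
  rw [bpar_succ]
  cases hb : bpar k c i
  · simp only [Bool.false_eq_true, ite_false, Bool.not_false, ite_true]
    exact adj_vV_vV f (by omega) (by omega) (by omega) (by omega)
  · simp only [ite_true, Bool.not_true, Bool.false_eq_true, ite_false]
    exact adj_vV_vV f (by omega) (by omega) (by omega) (by omega)

lemma buildL_chain' (c : Bool) (m : ℕ) (hm : m ≤ k-1) :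
    (buildL h3 f c m).Chain' (pastedGk k f).Adj := by
  induction m with
  | zero => exact List.isChain_nil
  | succ m ih =>
    show (segL h3 f c (k-1-(m+1)) ++ buildL h3 f c m).Chain' _
    rw [List.Chain', List.isChain_append]
    refine ⟨segL_chain' h3 f c _ (by omega), ih (by omega), ?_⟩
    intro x hx y hy
    rcases Nat.eq_zero_or_pos m with rfl | hm'
    · simp only [show buildL h3 f c 0 = [] from rfl, List.head?_nil] at hy
      exact absurd hy (by simp)
    · rw [segL_getLast? h3 f c _] at hx
      rw [buildL_head? h3 f c m hm'] at hy
      simp only [Option.mem_some_iff] at hx hy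
      subst hx; subst hy
      have : k-1-m = (k-1-(m+1)) + 1 := by omega
      rw [this]
      exact adj_exit_entry f c _ (by omega)

lemma mem_buildL (c : Bool) (m : ℕ) (hm : m ≤ k-1) {x : Fin (3*k+1) ⊕ W}
    (hx : x ∈ buildL h3 f c m) :
    ∃ i, k-1-m ≤ i ∧ i ≤ k-2 ∧
      ((x = vV k W i ∨ x = vV k W (k+i) ∨ x = vV k W (3*k-i)) ∨
        (∃ w, x = Sum.inr w ∧ (f w = eU k h3 i ∨ f w = eV k h3 i))) := by
  induction m with
  | zero => exact absurd hx (by simp [buildL])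
  | succ m ih =>
    rcases List.mem_append.1 hx with h | h
    · exact ⟨k-1-(m+1), le_refl _, by omega, mem_segL h3 f h⟩
    · obtain ⟨i, hi1, hi2, hi3⟩ := ih (by omega) h
      exact ⟨i, by omega, hi2, hi3⟩

lemma buildL_nodup (c : Bool) (m : ℕ) (hm : m ≤ k-1) : (buildL h3 f c m).Nodup := by
  induction m with
  | zero => simp [buildL]
  | succ m ih =>
    show (segL h3 f c (k-1-(m+1)) ++ buildL h3 f c m).Nodup
    rw [List.nodup_append]
    refine ⟨segL_nodup h3 f c _ (by omega), ih (by omega), ?_⟩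
    rintro x hx _ hx' rfl
    obtain ⟨i, hi1, hi2, hi3⟩ := mem_buildL h3 f c m (by omega) hx'
    have hj2 : k-1-(m+1) < i := by omega
    rcases mem_segL h3 f hx with (h | h | h) | ⟨w, rfl, hw⟩
    · rcases hi3 with (h' | h' | h') | ⟨w, hw, -⟩
      · exact absurd (vV_inj (by omega) (by omega) (h ▸ h')) (by omega)
      · exact absurd (vV_inj (by omega) (by omega) (h ▸ h')) (by omega)
      · exact absurd (vV_inj (by omega) (by omega) (h ▸ h')) (by omega)
      · rw [h] at hw; simp [vV] at hw
    · rcases hi3 with (h' | h' | h') | ⟨w, hw, -⟩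
      · exact absurd (vV_inj (by omega) (by omega) (h ▸ h')) (by omega)
      · exact absurd (vV_inj (by omega) (by omega) (h ▸ h')) (by omega)
      · exact absurd (vV_inj (by omega) (by omega) (h ▸ h')) (by omega)
      · rw [h] at hw; simp [vV] at hw
    · rcases hi3 with (h' | h' | h') | ⟨w, hw, -⟩
      · exact absurd (vV_inj (by omega) (by omega) (h ▸ h')) (by omega)
      · exact absurd (vV_inj (by omega) (by omega) (h ▸ h')) (by omega)
      · exact absurd (vV_inj (by omega) (by omega) (h ▸ h')) (by omega)
      · rw [h] at hw; simp [vV] at hw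
    · rcases hi3 with (h' | h' | h') | ⟨w', hw', hfw'⟩
      · simp [vV] at h'
      · simp [vV] at h'
      · simp [vV] at h'
      · obtain rfl : w' = w := Sum.inr_injective hw'.symm
        rcases hw with hw | hw <;> rcases hfw' with hfw' | hfw'
        · exact absurd (eU_inj h3 (by omega) (by omega) (hw.symm.trans hfw')) (by omega)
        · exact eU_ne_eV h3 _ _ (hw.symm.trans hfw')
        · exact eU_ne_eV h3 _ _ (hfw'.symm.trans hw)
        · exact absurd (eV_inj h3 (by omega) (by omega) (hw.symm.trans hfw')) (by omega)

lemma buildL_length (c : Bool) (m : ℕ) (hm : m ≤ k-1) :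
    (buildL h3 f c m).length = 3*m + ∑ i ∈ Finset.Ico (k-1-m) (k-1),
      ((Finset.univ.filter (fun w => f w = eU k h3 i)).card
        + (Finset.univ.filter (fun w => f w = eV k h3 i)).card) := by
  induction m with
  | zero => simp [buildL]
  | succ m ih =>
    show (segL h3 f c (k-1-(m+1)) ++ buildL h3 f c m).length = _
    rw [List.length_append, segL_length, ih (by omega)]
    rw [Finset.sum_eq_sum_Ico_succ_bot (by omega : k-1-(m+1) < k-1)]
    have : k-1-(m+1)+1 = k-1-m := by omega
    rw [this]
    ring
end Part4
section Part5
variable {k : ℕ} {W : Type*} [Fintype W] [DecidableEq W] (h3 : 3 ≤ k) (f : W → HeavyIdx k)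

def Sc (f : W → HeavyIdx k) (e : HeavyIdx k) : ℕ := (Finset.univ.filter (fun w => f w = e)).card

/-- the rest of the closed cycle list after the start vertex `x_{k-1}`. -/
noncomputable def restL (c : Bool) (mid : List (Fin (3*k+1) ⊕ W)) : List (Fin (3*k+1) ⊕ W) :=
  buildL h3 f c (k-1) ++ (mid ++ (vV k W (2*k-1) :: flist k f (eU k h3 (k-1))))

lemma buildL_ne_nil (c : Bool) (m : ℕ) (hm : 1 ≤ m) : buildL h3 f c m ≠ [] := by
  obtain ⟨m', rfl⟩ : ∃ m', m = m' + 1 := ⟨m - 1, by omega⟩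
  show segL h3 f c (k-1-(m'+1)) ++ buildL h3 f c m' ≠ []
  simp [segL_ne_nil]

lemma getLast?_cons_ne_nil {α : Type*} (a : α) {l : List α} (h : l ≠ []) :
    (a :: l).getLast? = l.getLast? := by
  cases l with
  | nil => exact absurd rfl h
  | cons b t => exact List.getLast?_cons_cons

lemma bridge_chain' : ((vV k W (2*k-1) : Fin (3*k+1) ⊕ W) ::
    (flist k f (eU k h3 (k-1)) ++ [vV k W (k-1)])).Chain' (pastedGk k f).Adj := by
  apply chain'_bridge _ _ _ (flist_chain' f _)
  · intro x hx
    rw [show 2*k-1 = k + (k-1) by omega, vV_eq_end2_eU h3 (k-1) (by omega)]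
    exact (adj_end_flist (Or.inr rfl) hx).1
  · intro x hx
    rw [vV_eq_end1_eU h3 (k-1) (by omega)]
    exact (adj_end_flist (Or.inl rfl) hx).2
  · exact adj_vV_vV f (by omega) (by omega) (by omega) (by omega)

lemma full_chain' (c : Bool) (mid : List (Fin (3*k+1) ⊕ W))
    (hmid : (c = true ∧ mid = [vV k W (2*k+1), vV k W (2*k)]) ∨ (c = false ∧ mid = [])) :
    ((vV k W (k-1) : Fin (3*k+1) ⊕ W) ::
      (restL h3 f c mid ++ [vV k W (k-1)])).Chain' (pastedGk k f).Adj := by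
  have heq : (vV k W (k-1) : Fin (3*k+1) ⊕ W) :: (restL h3 f c mid ++ [vV k W (k-1)]) =
      (vV k W (k-1) :: buildL h3 f c (k-1)) ++
      (mid ++ (vV k W (2*k-1) :: (flist k f (eU k h3 (k-1)) ++ [vV k W (k-1)]))) := by
    simp [restL]
  rw [heq, List.Chain', List.isChain_append]
  refine ⟨?_, ?_, ?_⟩
  · rw [List.isChain_cons]
    refine ⟨?_, buildL_chain' h3 f c (k-1) (le_refl _)⟩
    intro y hy
    rw [buildL_head? h3 f c (k-1) (by omega)] at hy
    simp only [Option.mem_some_iff] at hy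
    subst hy
    unfold entryV
    have hi0 : k-1-(k-1) = 0 := by omega
    rw [hi0]
    split
    · exact adj_vV_vV f (by omega) (by omega) (by omega) (by omega)
    · exact adj_vV_vV f (by omega) (by omega) (by omega) (by omega)
  · rcases hmid with ⟨rfl, rfl⟩ | ⟨rfl, rfl⟩
    · simp only [List.cons_append, List.nil_append]
      rw [List.isChain_cons_cons, List.isChain_cons_cons]
      exact ⟨adj_vV_vV f (by omega) (by omega) (by omega) (by omega),
        adj_vV_vV f (by omega) (by omega) (by omega) (by omega), bridge_chain' h3 f⟩
    · rw [List.nil_append]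
      exact bridge_chain' h3 f
  · intro x hx y hy
    have hxl : (vV k W (k-1) :: buildL h3 f c (k-1)).getLast? = some (exitV c (k-2)) := by
      rw [getLast?_cons_ne_nil _ (buildL_ne_nil h3 f c (k-1) (by omega))]
      exact buildL_getLast? h3 f c (k-1) (by omega)
    rw [hxl] at hx
    simp only [Option.mem_some_iff] at hx
    subst hx
    rcases hmid with ⟨rfl, rfl⟩ | ⟨rfl, rfl⟩
    · simp only [List.cons_append, List.head?_cons, Option.mem_some_iff] at hy
      subst hy
      have hb : bpar k true (k-2) = true := by
        unfold bpar
        have : (k-2+k) % 2 = 0 := by omega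
        simp [this]
      unfold exitV
      rw [hb, if_pos rfl, show 3*k-(k-2) = 2*k+2 by omega]
      exact adj_vV_vV f (by omega) (by omega) (by omega) (by omega)
    · simp only [List.nil_append, List.head?_cons, Option.mem_some_iff] at hy
      subst hy
      have hb : bpar k false (k-2) = false := by
        unfold bpar
        have : (k-2+k) % 2 = 0 := by omega
        simp [this]
      unfold exitV
      rw [hb, if_neg (by simp), show k+(k-2) = 2*k-2 by omega]
      exact adj_vV_vV f (by omega) (by omega) (by omega) (by omega)

lemma mem_restL (c : Bool) (mid : List (Fin (3*k+1) ⊕ W)) {x : Fin (3*k+1) ⊕ W}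
    (hx : x ∈ restL h3 f c mid) :
    (∃ i, i ≤ k-2 ∧ (x = vV k W i ∨ x = vV k W (k+i) ∨ x = vV k W (3*k-i)) ∨
      ∃ w, x = Sum.inr w ∧ (f w = eU k h3 i ∨ f w = eV k h3 i)) ∨
    (x ∈ mid ∨ x = vV k W (2*k-1) ∨
      ∃ w, x = Sum.inr w ∧ f w = eU k h3 (k-1)) := by
  unfold restL at hx
  rcases List.mem_append.1 hx with h | h
  · obtain ⟨i, hi1, hi2, hi3⟩ := mem_buildL h3 f c (k-1) (le_refl _) h
    rcases hi3 with h' | h'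
    · exact Or.inl ⟨i, Or.inl ⟨hi2, h'⟩⟩
    · exact Or.inl ⟨i, Or.inr h'⟩
  · rcases List.mem_append.1 h with h | h
    · exact Or.inr (Or.inl h)
    · rcases List.mem_cons.1 h with rfl | h
      · exact Or.inr (Or.inr (Or.inl rfl))
      · obtain ⟨w, rfl, hw⟩ := mem_flist.1 h
        exact Or.inr (Or.inr (Or.inr ⟨w, rfl, hw⟩))

lemma nodup_full (c : Bool) (mid : List (Fin (3*k+1) ⊕ W))
    (hmid : mid = [vV k W (2*k+1), vV k W (2*k)] ∨ mid = []) :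
    ((vV k W (k-1) : Fin (3*k+1) ⊕ W) :: restL h3 f c mid).Nodup := by
  have hmidm : ∀ x ∈ mid, x = vV k W (2*k) ∨ x = vV k W (2*k+1) := by
    rcases hmid with rfl | rfl
    · intro x hx
      rcases List.mem_cons.1 hx with rfl | hx
      · exact Or.inr rfl
      · rcases List.mem_singleton.1 (by simpa using hx) with rfl
        exact Or.inl rfl
    · intro x hx; simp at hx
  have hmidnd : mid.Nodup := by
    rcases hmid with rfl | rfl
    · rw [List.nodup_cons]
      refine ⟨?_, by simp⟩
      intro h
      rcases List.mem_cons.1 h with h | h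
      · exact absurd (vV_inj (by omega) (by omega) h) (by omega)
      · simp at h
    · simp
  have htail_nd : ((vV k W (2*k-1) : Fin (3*k+1) ⊕ W) :: flist k f (eU k h3 (k-1))).Nodup := by
    rw [List.nodup_cons]
    refine ⟨?_, flist_nodup f _⟩
    intro h
    obtain ⟨w, hw, -⟩ := mem_flist.1 h
    simp [vV] at hw
  have hmidtail_nd : (mid ++ (vV k W (2*k-1) :: flist k f (eU k h3 (k-1)))).Nodup := by
    rw [List.nodup_append]
    refine ⟨hmidnd, htail_nd, ?_⟩
    rintro x hx _ hmem rfl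
    rcases hmidm x hx with rfl | rfl <;>
      rcases List.mem_cons.1 hmem with h | h
    · exact absurd (vV_inj (by omega) (by omega) h) (by omega)
    · obtain ⟨w, hw, -⟩ := mem_flist.1 h; simp [vV] at hw
    · exact absurd (vV_inj (by omega) (by omega) h) (by omega)
    · obtain ⟨w, hw, -⟩ := mem_flist.1 h; simp [vV] at hw
  have hrest_nd : (restL h3 f c mid).Nodup := by
    unfold restL
    rw [List.nodup_append]
    refine ⟨buildL_nodup h3 f c (k-1) (le_refl _), hmidtail_nd, ?_⟩
    rintro x hx _ hmem rfl
    obtain ⟨i, hi1, hi2, hi3⟩ := mem_buildL h3 f c (k-1) (le_refl _) hx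
    rcases List.mem_append.1 hmem with h | h
    · have hxv : x = vV k W (2*k) ∨ x = vV k W (2*k+1) := hmidm x h
      rcases hi3 with (h' | h' | h') | ⟨w, hw, -⟩
      · rcases hxv with rfl | rfl
        · exact absurd (vV_inj (by omega) (by omega) h'.symm) (by omega)
        · exact absurd (vV_inj (by omega) (by omega) h'.symm) (by omega)
      · rcases hxv with rfl | rfl
        · exact absurd (vV_inj (by omega) (by omega) h'.symm) (by omega)
        · exact absurd (vV_inj (by omega) (by omega) h'.symm) (by omega)
      · rcases hxv with rfl | rfl
        · exact absurd (vV_inj (by omega) (by omega) h'.symm) (by omega)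
        · exact absurd (vV_inj (by omega) (by omega) h'.symm) (by omega)
      · rcases hxv with rfl | rfl
        · simp [vV] at hw
        · simp [vV] at hw
    · rcases List.mem_cons.1 h with rfl | h
      · rcases hi3 with (h' | h' | h') | ⟨w, hw, -⟩
        · exact absurd (vV_inj (by omega) (by omega) h'.symm) (by omega)
        · exact absurd (vV_inj (by omega) (by omega) h'.symm) (by omega)
        · exact absurd (vV_inj (by omega) (by omega) h'.symm) (by omega)
        · simp [vV] at hw
      · obtain ⟨w, rfl, hw⟩ := mem_flist.1 h
        rcases hi3 with (h' | h' | h') | ⟨w', hw', hfw'⟩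
        · simp [vV] at h'
        · simp [vV] at h'
        · simp [vV] at h'
        · obtain rfl : w' = w := Sum.inr_injective hw'.symm
          rcases hfw' with hfw' | hfw'
          · exact absurd (eU_inj h3 (by omega) (by omega) (hfw'.symm.trans hw)) (by omega)
          · exact eU_ne_eV h3 _ _ (hw.symm.trans hfw')
  rw [List.nodup_cons]
  refine ⟨?_, hrest_nd⟩
  intro hmem
  rcases mem_restL h3 f c mid hmem with ⟨i, hcase⟩ | (h | h | ⟨w, hw, -⟩)
  · rcases hcase with ⟨hi2, (h | h | h)⟩ | ⟨w, hw, -⟩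
    · exact absurd (vV_inj (by omega) (by omega) h) (by omega)
    · exact absurd (vV_inj (by omega) (by omega) h) (by omega)
    · exact absurd (vV_inj (by omega) (by omega) h) (by omega)
    · simp [vV] at hw
  · rcases hmidm _ h with h' | h'
    · exact absurd (vV_inj (by omega) (by omega) h') (by omega)
    · exact absurd (vV_inj (by omega) (by omega) h') (by omega)
  · exact absurd (vV_inj (by omega) (by omega) h) (by omega)
  · simp [vV] at hw

lemma sum_fibers :
    (∑ i ∈ Finset.range (k-1), (Sc f (eU k h3 i) + Sc f (eV k h3 i))) + Sc f (eU k h3 (k-1))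
      = Fintype.card W := by
  have hcard : Fintype.card W = ∑ e : HeavyIdx k, Sc f e := by
    rw [← Finset.card_univ]
    exact Finset.card_eq_sum_card_fiberwise (fun x _ => Finset.mem_univ (f x))
  rw [hcard, Fintype.sum_sum_type]
  have h1 : ∀ j : Fin k, Sc f (Sum.inl j) = Sc f (eU k h3 j.val) := by
    intro j
    congr 1
    unfold eU
    congr 1
    exact Fin.ext (by simp [Nat.mod_eq_of_lt j.isLt])
  have h2 : ∀ j : Fin (k-1), Sc f (Sum.inr j) = Sc f (eV k h3 j.val) := by
    intro j
    congr 1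
    unfold eV
    congr 1
    exact Fin.ext (by simp [Nat.mod_eq_of_lt j.isLt])
  rw [Finset.sum_congr rfl (fun j _ => h1 j), Finset.sum_congr rfl (fun j _ => h2 j)]
  rw [Fin.sum_univ_eq_sum_range (fun i => Sc f (eU k h3 i)) k,
    Fin.sum_univ_eq_sum_range (fun i => Sc f (eV k h3 i)) (k-1)]
  rw [show Finset.range k = Finset.range ((k-1)+1) by rw [Nat.sub_add_cancel (by omega)]]
  rw [Finset.sum_range_succ, Finset.sum_add_distrib]
  ring

lemma length_full (c : Bool) (mid : List (Fin (3*k+1) ⊕ W)) :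
    ((vV k W (k-1) : Fin (3*k+1) ⊕ W) :: restL h3 f c mid).length
      = 3*k - 1 + mid.length + Fintype.card W := by
  unfold restL
  rw [List.length_cons, List.length_append, List.length_append, List.length_cons,
    flist_length, buildL_length h3 f c (k-1) (le_refl _)]
  rw [show k-1-(k-1) = 0 from by omega, ← Finset.range_eq_Ico]
  have := sum_fibers h3 f
  unfold Sc at this
  omega

end Part5
section Part6
variable {k : ℕ} {W : Type*} [Fintype W] [DecidableEq W] (h3 : 3 ≤ k) (f : W → HeavyIdx k)

lemma card_VT : Fintype.card (Fin (3*k+1) ⊕ W) = 3*k+1 + Fintype.card W := by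
  simp [Fintype.card_sum]

include h3

lemma exists_cycHam :
    ∃ p : (pastedGk k f).Walk (vV k W (k-1)) (vV k W (k-1)), p.IsHamiltonianCycle := by
  set a : Fin (3*k+1) ⊕ W := vV k W (k-1) with ha
  set l := restL h3 f true [vV k W (2*k+1), vV k W (2*k)] with hl
  have hch : List.Chain (pastedGk k f).Adj a (l ++ [a]) :=
    full_chain' h3 f true _ (Or.inl ⟨rfl, rfl⟩)
  have hnd : (a :: l).Nodup := nodup_full h3 f true _ (Or.inl rfl)
  have hlenfull : (a :: l).length = 3*k-1 + 2 + Fintype.card W := by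
    rw [hl, ha, length_full h3 f]
    simp
  have hlen : 2 ≤ l.length := by
    have : (a :: l).length = l.length + 1 := by simp
    omega
  obtain ⟨p, hcyc, hsup⟩ := CEaux.exists_cycle_of_chain a l hch hnd hlen
  have hcover : (a :: l).toFinset = Finset.univ := by
    apply Finset.eq_univ_of_card
    rw [List.toFinset_card_of_nodup hnd, card_VT, hlenfull]
    omega
  refine ⟨p, ?_⟩
  rw [SimpleGraph.Walk.isHamiltonianCycle_iff_isCycle_and_support_count_tail_eq_one]
  refine ⟨hcyc, fun x => ?_⟩
  have htail : p.support.tail = l ++ [a] := by rw [hsup]; rfl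
  rw [htail, @List.Perm.count_eq _ instBEqOfDecidableEq _ _ (List.perm_append_singleton a l)]
  show @List.count _ instBEqOfDecidableEq x (a :: l) = 1
  apply @List.count_eq_one_of_mem _ instBEqOfDecidableEq _ _ _ hnd
  rw [← List.mem_toFinset, hcover]
  exact Finset.mem_univ x

lemma pasted_isHamiltonian : (pastedGk k f).IsHamiltonian := by
  intro _
  obtain ⟨p, hp⟩ := exists_cycHam h3 f
  exact ⟨_, p, hp⟩

lemma exists_cycC :
    ∃ p : (pastedGk k f).Walk (vV k W (k-1)) (vV k W (k-1)), p.IsCycle ∧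
      p.support.toFinset = Finset.univ \ {vV k W (2*k), vV k W (2*k+1)} := by
  set a : Fin (3*k+1) ⊕ W := vV k W (k-1) with ha
  set l := restL h3 f false [] with hl
  have hch : List.Chain (pastedGk k f).Adj a (l ++ [a]) :=
    full_chain' h3 f false _ (Or.inr ⟨rfl, rfl⟩)
  have hnd : (a :: l).Nodup := nodup_full h3 f false _ (Or.inr rfl)
  have hlenfull : (a :: l).length = 3*k-1 + Fintype.card W := by
    rw [hl, ha, length_full h3 f]
    simp
  have hlen : 2 ≤ l.length := by
    have : (a :: l).length = l.length + 1 := by simp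
    omega
  obtain ⟨p, hcyc, hsup⟩ := CEaux.exists_cycle_of_chain a l hch hnd hlen
  have hnotmem : vV k W (2*k) ∉ (a :: l) ∧ vV k W (2*k+1) ∉ (a :: l) := by
    constructor <;>
    · intro hmem
      rcases List.mem_cons.1 hmem with h | h
      · exact absurd (vV_inj (by omega) (by omega) h.symm) (by omega)
      · rcases mem_restL h3 f false [] h with ⟨i, hcase⟩ | (h' | h' | ⟨w, hw, -⟩)
        · rcases hcase with ⟨hi2, (h' | h' | h')⟩ | ⟨w, hw, -⟩
          · exact absurd (vV_inj (by omega) (by omega) h'.symm) (by omega)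
          · exact absurd (vV_inj (by omega) (by omega) h'.symm) (by omega)
          · exact absurd (vV_inj (by omega) (by omega) h'.symm) (by omega)
          · simp [vV] at hw
        · simp at h'
        · exact absurd (vV_inj (by omega) (by omega) h'.symm) (by omega)
        · simp [vV] at hw
  have hne2 : (vV k W (2*k) : Fin (3*k+1) ⊕ W) ≠ vV k W (2*k+1) := by
    intro h
    exact absurd (vV_inj (by omega) (by omega) h) (by omega)
  have hcover : (a :: l).toFinset = Finset.univ \ {vV k W (2*k), vV k W (2*k+1)} := by
    apply Finset.eq_of_subset_of_card_le
    · intro x hx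
      rw [List.mem_toFinset] at hx
      rw [Finset.mem_sdiff]
      refine ⟨Finset.mem_univ x, ?_⟩
      intro hmem
      rcases Finset.mem_insert.1 hmem with rfl | hmem'
      · exact hnotmem.1 hx
      · rcases Finset.mem_singleton.1 hmem' with rfl
        exact hnotmem.2 hx
    · rw [List.toFinset_card_of_nodup hnd, hlenfull]
      rw [Finset.card_sdiff_of_subset (by
        intro x hx
        exact Finset.mem_univ x)]
      rw [Finset.card_univ, card_VT]
      have : ({vV k W (2*k), vV k W (2*k+1)} : Finset (Fin (3*k+1) ⊕ W)).card = 2 := by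
        rw [Finset.card_insert_of_notMem (by simpa using hne2), Finset.card_singleton]
      omega
  refine ⟨p, hcyc, ?_⟩
  have : p.support.toFinset = (a :: l).toFinset := by
    rw [hsup]
    ext x
    simp only [List.toFinset_cons, List.toFinset_append, List.toFinset_cons,
      Finset.mem_insert, Finset.mem_union, List.mem_toFinset, List.toFinset_nil]
    constructor
    · rintro (rfl | h)
      · exact Or.inl rfl
      · rcases h with h | h
        · exact Or.inr h
        · simp at h
          exact Or.inl h
    · rintro (rfl | h)
      · exact Or.inl rfl
      · exact Or.inr (Or.inl h)
  rw [this, hcover]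

end Part6
section Part7
open SimpleGraph
variable {k : ℕ} {W : Type*} [Fintype W] [DecidableEq W] (h3 : 3 ≤ k) (f : W → HeavyIdx k)

def Fset (f : W → HeavyIdx k) (e : HeavyIdx k) : Set (Fin (3*k+1) ⊕ W) :=
  {t | ∃ w, t = Sum.inr w ∧ f w = e}

lemma vV_not_mem_Fset (m : ℕ) (e : HeavyIdx k) : vV k W m ∉ Fset f e := by
  rintro ⟨w, hw, -⟩
  simp [vV] at hw

lemma Fset_disj {e e' : HeavyIdx k} (h : e ≠ e') (t : Fin (3*k+1) ⊕ W)
    (ht : t ∈ Fset f e) (ht' : t ∈ Fset f e') : False := by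
  obtain ⟨w, rfl, hw⟩ := ht
  obtain ⟨w', hw', hfw'⟩ := ht'
  obtain rfl : w' = w := Sum.inr_injective hw'.symm
  exact h (hw ▸ hfw' ▸ rfl)

lemma adj_inr_elim {w : W} {t : Fin (3*k+1) ⊕ W} (h : (pastedGk k f).Adj (Sum.inr w) t) :
    t = Sum.inl (heavyEnds k (f w)).1 ∨ t = Sum.inl (heavyEnds k (f w)).2 ∨ t ∈ Fset f (f w) := by
  match t with
  | Sum.inl a =>
    rcases h with h | h
    · exact Or.inl (by rw [h])
    · exact Or.inr (Or.inl (by rw [h]))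
  | Sum.inr w' =>
    exact Or.inr (Or.inr ⟨w', rfl, h.2.symm⟩)

lemma end1_val_lt (e : HeavyIdx k) : ((heavyEnds k e).1).val < k := by
  match e with
  | Sum.inl i => exact i.isLt
  | Sum.inr i => exact (i.castLE (Nat.sub_le k 1)).isLt

lemma end2_val_cases (e : HeavyIdx k) :
    (∃ i, i ≤ k-1 ∧ e = eU k h3 i ∧ ((heavyEnds k e).2).val = k + i) ∨
    (∃ i, i ≤ k-2 ∧ e = eV k h3 i ∧ ((heavyEnds k e).2).val = 3*k - i) := by
  match e with
  | Sum.inl i =>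
    refine Or.inl ⟨i.val, by omega, ?_, rfl⟩
    unfold eU
    congr 1
    exact Fin.ext (by simp [Nat.mod_eq_of_lt i.isLt])
  | Sum.inr i =>
    have hi : i.val < k - 1 := i.isLt
    refine Or.inr ⟨i.val, by omega, ?_, ?_⟩
    · unfold eV
      congr 1
      exact Fin.ext (by simp [Nat.mod_eq_of_lt hi])
    · show (vv k (i.castLE (Nat.sub_le k 1))).val = 3*k - i.val
      unfold vv
      rfl

lemma end1_eq_vV (e : HeavyIdx k) : Sum.inl (heavyEnds k e).1 = vV k W ((heavyEnds k e).1).val := by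
  rw [vV_val ((heavyEnds k e).1).val (by have := end1_val_lt (k := k) e; omega) (by omega)]

lemma end2_eq_vV (e : HeavyIdx k) : Sum.inl (heavyEnds k e).2 = vV k W ((heavyEnds k e).2).val := by
  have h2 : ((heavyEnds k e).2).val ≤ 3*k := by omega
  rw [vV_val ((heavyEnds k e).2).val h2 (by omega)]

lemma adj_vV_elim {m : ℕ} (hm : m ≤ 3*k) {t : Fin (3*k+1) ⊕ W}
    (h : (pastedGk k f).Adj (vV k W m) t) :
    (∃ mb, mb ≤ 3*k ∧ t = vV k W mb ∧ mb ≠ m ∧ (m < k ∨ mb < k ∨ m+1 = mb ∨ mb+1 = m)) ∨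
    (∃ w, t = Sum.inr w ∧
      (((heavyEnds k (f w)).1).val = m ∨ ((heavyEnds k (f w)).2).val = m)) := by
  have hmval : (vV k W m) = Sum.inl (⟨m, by omega⟩ : Fin (3*k+1)) := vV_val m hm _
  match t with
  | Sum.inl b =>
    rw [hmval] at h
    obtain ⟨hne, hcase⟩ := (h : (Gk k).Adj _ _)
    refine Or.inl ⟨b.val, by omega, ?_, ?_, by simpa using hcase⟩
    · rw [vV_val b.val (by omega) (by omega)]
    · intro hbm
      exact hne (Fin.ext (by show m = b.val; omega))
  | Sum.inr w =>
    rw [hmval] at h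
    rcases (h : _ ∨ _) with h | h
    · exact Or.inr ⟨w, rfl, Or.inl (by rw [← h])⟩
    · exact Or.inr ⟨w, rfl, Or.inr (by rw [← h])⟩

variable {v0 : Fin (3*k+1) ⊕ W} {c : (pastedGk k f).Walk v0 v0}

/-- every clique grabs a dart at each of its two ends -/
lemma clique_dart_aux (hc : c.IsCycle) {M : ℕ}
    (hfull : ∀ t, t ∈ c.support ↔ t ≠ vV k W M) (e : HeavyIdx k) (a b : Fin (3*k+1))
    (hends : ((heavyEnds k e).1 = a ∧ (heavyEnds k e).2 = b) ∨
      ((heavyEnds k e).1 = b ∧ (heavyEnds k e).2 = a))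
    (hne : a ≠ b) (haM : Sum.inl a ≠ vV k W M) (hbM : Sum.inl b ≠ vV k W M)
    (hfe : ∃ w, f w = e) :
    ∃ d ∈ c.darts, (d.fst = Sum.inl a ∧ d.snd ∈ Fset f e) ∨
      (d.snd = Sum.inl a ∧ d.fst ∈ Fset f e) := by
  by_contra hno
  push_neg at hno
  obtain ⟨w0, hw0⟩ := hfe
  have hxsup : Sum.inr w0 ∈ c.support := (hfull _).2 (by simp [vV])
  have hysup : Sum.inl a ∈ c.support := (hfull _).2 haM
  have hbsup : Sum.inl b ∈ c.support := (hfull _).2 hbM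
  have hends_mem : ∀ w, f w = e → ∀ t, (pastedGk k f).Adj (Sum.inr w) t →
      t = Sum.inl a ∨ t = Sum.inl b ∨ t ∈ Fset f e := by
    intro w hw t ht
    rcases adj_inr_elim f ht with h | h | h
    · rw [hw] at h
      rcases hends with ⟨h1, -⟩ | ⟨h1, -⟩
      · exact Or.inl (by rw [h, h1])
      · exact Or.inr (Or.inl (by rw [h, h1]))
    · rw [hw] at h
      rcases hends with ⟨-, h2⟩ | ⟨-, h2⟩
      · exact Or.inr (Or.inl (by rw [h, h2]))
      · exact Or.inl (by rw [h, h2])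
    · rw [hw] at h
      exact Or.inr (Or.inr h)
  have hnoeq : ∀ d ∈ c.darts, d.fst ∈ Fset f e → d.snd ≠ Sum.inl a := by
    intro d hd hdf hda
    exact (hno d hd).2 hda hdf
  have hnoeq' : ∀ d ∈ c.darts, d.snd ∈ Fset f e → d.fst ≠ Sum.inl a := by
    intro d hd hdf hda
    exact (hno d hd).1 hda hdf
  obtain ⟨d1, hd1, d2, hd2, ⟨hd1f, hd1s⟩, ⟨hd2f, hd2s⟩, hedge⟩ :=
    CEaux.cycle_two_cross hc (Fset f e) hxsup hysup ⟨w0, rfl, hw0⟩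
      (by rintro ⟨w, hw, -⟩; simp at hw)
  obtain ⟨w1, hw1eq, hw1⟩ := hd1f
  have hd1adj := d1.adj
  rw [hw1eq] at hd1adj
  have hsnd1 : d1.snd = Sum.inl b := by
    rcases hends_mem w1 hw1 _ hd1adj with h | h | h
    · exact absurd h (hnoeq d1 hd1 ⟨w1, hw1eq, hw1⟩)
    · exact h
    · exact absurd h hd1s
  obtain ⟨w2, hw2eq, hw2⟩ := hd2s
  have hd2adj := d2.adj.symm
  rw [hw2eq] at hd2adj
  have hfst2 : d2.fst = Sum.inl b := by
    rcases hends_mem w2 hw2 _ hd2adj with h | h | h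
    · exact absurd h (hnoeq' d2 hd2 ⟨w2, hw2eq, hw2⟩)
    · exact h
    · exact absurd h hd2f
  refine CEaux.cycle_no_closed_set hc (Fset f e ∪ {Sum.inl b}) hxsup hysup
    (Or.inl ⟨w0, rfl, hw0⟩) ?_ ?_
  · rintro (⟨w, hw, -⟩ | h)
    · simp at hw
    · exact hne (Sum.inl_injective h)
  · intro d hd hdB
    rcases hdB with ⟨w, hweq, hw⟩ | hdb
    · have hdadj := d.adj
      rw [hweq] at hdadj
      rcases hends_mem w hw _ hdadj with h | h | h
      · exact absurd h (hnoeq d hd ⟨w, hweq, hw⟩)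
      · exact Or.inr h
      · exact Or.inl h
    · have : d = d2 := CEaux.out_dart_inj hc hd hd2 (by rw [hdb, hfst2])
      rw [this]
      exact Or.inl ⟨w2, hw2eq, hw2⟩

/-- confinement of a vertex's cycle darts -/
def Conf (c : (pastedGk k f).Walk v0 v0) (v : Fin (3*k+1) ⊕ W)
    (S : Set (Fin (3*k+1) ⊕ W)) : Prop :=
  ∀ d ∈ c.darts, (d.fst = v → d.snd ∈ S) ∧ (d.snd = v → d.fst ∈ S)

lemma conf_of_pin (hc : c.IsCycle) {a : Fin (3*k+1) ⊕ W} {S1 S2 : Set (Fin (3*k+1) ⊕ W)}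
    {d1 d2 : (pastedGk k f).Dart} (hd1 : d1 ∈ c.darts) (hd2 : d2 ∈ c.darts)
    (h1 : (d1.fst = a ∧ d1.snd ∈ S1) ∨ (d1.snd = a ∧ d1.fst ∈ S1))
    (h2 : (d2.fst = a ∧ d2.snd ∈ S2) ∨ (d2.snd = a ∧ d2.fst ∈ S2))
    (hdisj : ∀ t, t ∈ S1 → t ∈ S2 → False) : Conf f c a (S1 ∪ S2) :=
  CEaux.pin_darts hc hd1 hd2 h1 h2 hdisj

/-- if the only two possible dart partners of `v` are `t1 ≠ t2`, both are hit -/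
lemma force_two (hc : c.IsCycle) (v t1 t2 : Fin (3*k+1) ⊕ W) (hv : v ∈ c.support)
    (ht : t1 ≠ t2)
    (hposs : ∀ d ∈ c.darts, (d.fst = v → (d.snd = t1 ∨ d.snd = t2)) ∧
      (d.snd = v → (d.fst = t1 ∨ d.fst = t2))) :
    (∃ d ∈ c.darts, (d.fst = v ∧ d.snd = t1) ∨ (d.snd = v ∧ d.fst = t1)) ∧
    (∃ d ∈ c.darts, (d.fst = v ∧ d.snd = t2) ∨ (d.snd = v ∧ d.fst = t2)) := by
  obtain ⟨dO, hdO, hdOf⟩ := CEaux.exists_out_dart c hc.not_nil hv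
  obtain ⟨dI, hdI, hdIs⟩ := CEaux.exists_in_dart c hc.not_nil hv
  have hO := (hposs dO hdO).1 hdOf
  have hI := (hposs dI hdI).2 hdIs
  have hdiff : dO.snd ≠ dI.fst := by
    intro heq
    have hOp : dO.toProd = (v, dI.toProd.1) := by
      rw [← hdOf, ← heq]
    have hIp : dI.toProd = (dI.toProd.1, v) := by
      rw [← hdIs]
    have hedge : dO.edge = dI.edge := by
      show s(dO.toProd.1, dO.toProd.2) = s(dI.toProd.1, dI.toProd.2)
      rw [hOp, hIp]
      exact Sym2.eq_swap
    have hd := CEaux.dart_edge_inj hc hdO hdI hedge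
    have hadj := dO.adj
    rw [hdOf] at hadj
    rw [hd, hdIs] at hadj
    exact (pastedGk k f).irrefl hadj
  rcases hO with h1 | h1 <;> rcases hI with h2 | h2
  · exact absurd (h1.trans h2.symm) hdiff
  · exact ⟨⟨dO, hdO, Or.inl ⟨hdOf, h1⟩⟩, ⟨dI, hdI, Or.inr ⟨hdIs, h2⟩⟩⟩
  · exact ⟨⟨dI, hdI, Or.inr ⟨hdIs, h2⟩⟩, ⟨dO, hdO, Or.inl ⟨hdOf, h1⟩⟩⟩
  · exact absurd (h1.trans h2.symm) hdiff

end Part7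
section Part8
open SimpleGraph
variable {k : ℕ} {W : Type*} [Fintype W] [DecidableEq W] (h3 : 3 ≤ k) (f : W → HeavyIdx k)
variable {v0 : Fin (3*k+1) ⊕ W} {c : (pastedGk k f).Walk v0 v0}

lemma vV_ne' (m m' : ℕ) (hm : m ≤ 3*k) (hm' : m' ≤ 3*k) (h : m ≠ m') :
    vV k W m ≠ vV k W m' := fun he => h (vV_inj hm hm' he)

include h3

lemma end2_val_range (e : HeavyIdx k) : k ≤ ((heavyEnds k e).2).val ∧
    ((heavyEnds k e).2).val ≤ 3*k ∧ ((heavyEnds k e).2).val ≠ 2*k ∧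
    ((heavyEnds k e).2).val ≠ 2*k+1 := by
  rcases end2_val_cases h3 e with ⟨i, hi, -, hval⟩ | ⟨i, hi, -, hval⟩ <;> omega

lemma clique_side (hc : c.IsCycle) {M : ℕ} (hM : M = 2*k ∨ M = 2*k+1)
    (hfull : ∀ t, t ∈ c.support ↔ t ≠ vV k W M) (hf : Function.Surjective f) (e : HeavyIdx k) :
    (∃ d ∈ c.darts, (d.fst = Sum.inl (heavyEnds k e).1 ∧ d.snd ∈ Fset f e) ∨
      (d.snd = Sum.inl (heavyEnds k e).1 ∧ d.fst ∈ Fset f e)) ∧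
    (∃ d ∈ c.darts, (d.fst = Sum.inl (heavyEnds k e).2 ∧ d.snd ∈ Fset f e) ∨
      (d.snd = Sum.inl (heavyEnds k e).2 ∧ d.fst ∈ Fset f e)) := by
  have h1lt := end1_val_lt (k := k) e
  have h2r := end2_val_range h3 e
  have hne : (heavyEnds k e).1 ≠ (heavyEnds k e).2 := by
    intro h
    have := Fin.val_eq_of_eq h
    omega
  have haM : Sum.inl (heavyEnds k e).1 ≠ vV k W M := by
    rw [end1_eq_vV]
    exact vV_ne' _ _ (by omega) (by omega) (by omega)
  have hbM : Sum.inl (heavyEnds k e).2 ≠ vV k W M := by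
    rw [end2_eq_vV]
    exact vV_ne' _ _ (by omega) (by omega) (by omega)
  exact ⟨clique_dart_aux f hc hfull e _ _ (Or.inl ⟨rfl, rfl⟩) hne haM hbM (hf e),
    clique_dart_aux f hc hfull e _ _ (Or.inr ⟨rfl, rfl⟩) hne.symm hbM haM (hf e)⟩

lemma conf_xj (hc : c.IsCycle) {M : ℕ} (hM : M = 2*k ∨ M = 2*k+1)
    (hfull : ∀ t, t ∈ c.support ↔ t ≠ vV k W M) (hf : Function.Surjective f)
    (j : ℕ) (hj : j ≤ k-2) :
    Conf f c (vV k W j) (Fset f (eU k h3 j) ∪ Fset f (eV k h3 j)) := by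
  obtain ⟨dU, hdU, hdUp⟩ := (clique_side h3 f hc hM hfull hf (eU k h3 j)).1
  obtain ⟨dV, hdV, hdVp⟩ := (clique_side h3 f hc hM hfull hf (eV k h3 j)).1
  rw [show Sum.inl (heavyEnds k (eU k h3 j)).1 = vV k W j from
    (vV_eq_end1_eU h3 j (by omega)).symm] at hdUp
  rw [show Sum.inl (heavyEnds k (eV k h3 j)).1 = vV k W j from
    (vV_eq_end1_eV h3 j (by omega)).symm] at hdVp
  exact conf_of_pin f hc hdU hdV hdUp hdVp
    (fun t ht ht' => Fset_disj f (eU_ne_eV h3 j j) t ht ht')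

/-- exclusion: a dart partnered with `x_j` (`j ≤ k-2`) must be a pasted vertex -/
lemma xj_partner_inr (hc : c.IsCycle) {M : ℕ} (hM : M = 2*k ∨ M = 2*k+1)
    (hfull : ∀ t, t ∈ c.support ↔ t ≠ vV k W M) (hf : Function.Surjective f)
    {j : ℕ} (hj : j ≤ k-2) {d : (pastedGk k f).Dart} (hd : d ∈ c.darts) {m : ℕ} (hm : m ≤ 3*k) :
    ((d.fst = vV k W m → d.snd ≠ vV k W j) ∧ (d.snd = vV k W m → d.fst ≠ vV k W j)) := by
  have hconf := conf_xj h3 f hc hM hfull hf j hj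
  constructor
  · intro h1 h2
    rcases (hconf d hd).2 h2 with hmem | hmem
    · exact vV_not_mem_Fset f m _ (h1 ▸ hmem)
    · exact vV_not_mem_Fset f m _ (h1 ▸ hmem)
  · intro h1 h2
    rcases (hconf d hd).1 h2 with hmem | hmem
    · exact vV_not_mem_Fset f m _ (h1 ▸ hmem)
    · exact vV_not_mem_Fset f m _ (h1 ▸ hmem)

end Part8
section Part9
open SimpleGraph
variable {k : ℕ} {W : Type*} [Fintype W] [DecidableEq W] (h3 : 3 ≤ k) (f : W → HeavyIdx k)
variable {v0 : Fin (3*k+1) ⊕ W} {c : (pastedGk k f).Walk v0 v0}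

lemma conf_intro (v : Fin (3*k+1) ⊕ W) (S : Set (Fin (3*k+1) ⊕ W))
    (h : ∀ d ∈ c.darts, ∀ t, ((d.fst = v ∧ d.snd = t) ∨ (d.snd = v ∧ d.fst = t)) →
      (pastedGk k f).Adj v t → t ∈ c.support → t ∈ S) : Conf f c v S := by
  intro d hd
  constructor
  · intro h1
    exact h d hd d.snd (Or.inl ⟨h1, rfl⟩) (h1 ▸ d.adj)
      (SimpleGraph.Walk.dart_snd_mem_support_of_mem_darts c hd)
  · intro h1
    exact h d hd d.fst (Or.inr ⟨h1, rfl⟩) (h1 ▸ d.adj.symm)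
      (SimpleGraph.Walk.dart_fst_mem_support_of_mem_darts c hd)

lemma partner_excluded {v : Fin (3*k+1) ⊕ W} {S : Set (Fin (3*k+1) ⊕ W)}
    (hconf : Conf f c v S) {d : (pastedGk k f).Dart} (hd : d ∈ c.darts)
    {t : Fin (3*k+1) ⊕ W}
    (hor : (d.fst = t ∧ d.snd = v) ∨ (d.snd = t ∧ d.fst = v)) (htS : t ∉ S) : False := by
  rcases hor with ⟨h1, h2⟩ | ⟨h1, h2⟩
  · exact htS (h1 ▸ (hconf d hd).2 h2)
  · exact htS (h1 ▸ (hconf d hd).1 h2)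

include h3

lemma caseA (hc : c.IsCycle) (hfull : ∀ t, t ∈ c.support ↔ t ≠ vV k W (2*k+1))
    (hf : Function.Surjective f) : False := by
  have hM : (2*k+1 : ℕ) = 2*k ∨ (2*k+1 : ℕ) = 2*k+1 := Or.inr rfl
  have hsup : ∀ m, m ≤ 3*k → m ≠ 2*k+1 → vV k W m ∈ c.support := fun m hm hne =>
    (hfull _).2 (vV_ne' _ _ (by omega) (by omega) hne)
  -- the partners of z = vV (2k) are exactly x_{k-1} and u_{k-1}
  have hconfz : Conf f c (vV k W (2*k)) ({vV k W (k-1), vV k W (2*k-1)} : Set _) := by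
    apply conf_intro
    intro d hd t hor hadj htsup
    rcases adj_vV_elim f (by omega) hadj with ⟨mb, hmb3k, ht, hmbne, hcase⟩ | ⟨w, ht, hends⟩
    · have hne2k1 : mb ≠ 2*k+1 := fun hmb => ((hfull _).1 htsup) (by rw [ht, hmb])
      have hcase3 : mb ≤ k-2 ∨ mb = k-1 ∨ mb = 2*k-1 := by omega
      rcases hcase3 with hmb | hmb | hmb
      · rw [ht] at hor
        exact absurd (partner_excluded f (conf_xj h3 f hc hM hfull hf mb hmb) hd hor
          (by rintro (hmem | hmem) <;> exact vV_not_mem_Fset f (2*k) _ hmem)) not_false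
      · rw [hmb] at ht
        rw [ht]; exact Set.mem_insert _ _
      · rw [hmb] at ht
        rw [ht]; exact Set.mem_insert_of_mem _ rfl
    · exfalso
      rcases hends with h1 | h2
      · have := end1_val_lt (k := k) (f w); omega
      · have := end2_val_range h3 (f w); omega
  have hz_sup : vV k W (2*k) ∈ c.support := hsup (2*k) (by omega) (by omega)
  obtain ⟨hdz1e, hdz2e⟩ := force_two f hc (vV k W (2*k)) (vV k W (k-1)) (vV k W (2*k-1))
    hz_sup (vV_ne' _ _ (by omega) (by omega) (by omega))
    (by
      intro d hd
      have := hconfz d hd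
      constructor
      · intro h1
        rcases this.1 h1 with h | h
        · exact Or.inl h
        · exact Or.inr h
      · intro h1
        rcases this.2 h1 with h | h
        · exact Or.inl h
        · exact Or.inr h)
  obtain ⟨dz1, hdz1, hdz1p⟩ := hdz1e
  obtain ⟨dz2, hdz2, hdz2p⟩ := hdz2e
  have hend1x : Sum.inl (heavyEnds k (eU k h3 (k-1))).1 = vV k W (k-1) :=
    (vV_eq_end1_eU h3 (k-1) (by omega)).symm
  have hend2u : Sum.inl (heavyEnds k (eU k h3 (k-1))).2 = vV k W (2*k-1) := by
    rw [← vV_eq_end2_eU h3 (k-1) (by omega), show k+(k-1) = 2*k-1 from by omega]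
  obtain ⟨dA, hdA, hdAp⟩ := (clique_side h3 f hc hM hfull hf (eU k h3 (k-1))).1
  rw [hend1x] at hdAp
  obtain ⟨dB, hdB, hdBp⟩ := (clique_side h3 f hc hM hfull hf (eU k h3 (k-1))).2
  rw [hend2u] at hdBp
  have hdisj : ∀ t, t ∈ Fset f (eU k h3 (k-1)) → t ∈ ({vV k W (2*k)} : Set _) → False := by
    rintro t ht rfl
    exact vV_not_mem_Fset f (2*k) _ ht
  have hconfx : Conf f c (vV k W (k-1)) (Fset f (eU k h3 (k-1)) ∪ {vV k W (2*k)}) := by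
    refine conf_of_pin f hc hdA hdz1 hdAp ?_ hdisj
    rcases hdz1p with ⟨a, b⟩ | ⟨a, b⟩
    · exact Or.inr ⟨b, Set.mem_singleton_iff.2 a⟩
    · exact Or.inl ⟨b, Set.mem_singleton_iff.2 a⟩
  have hconfu : Conf f c (vV k W (2*k-1)) (Fset f (eU k h3 (k-1)) ∪ {vV k W (2*k)}) := by
    refine conf_of_pin f hc hdB hdz2 hdBp ?_ hdisj
    rcases hdz2p with ⟨a, b⟩ | ⟨a, b⟩
    · exact Or.inr ⟨b, Set.mem_singleton_iff.2 a⟩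
    · exact Or.inl ⟨b, Set.mem_singleton_iff.2 a⟩
  -- closure contradiction
  refine CEaux.cycle_no_closed_set hc
    (Fset f (eU k h3 (k-1)) ∪ {vV k W (2*k), vV k W (k-1), vV k W (2*k-1)})
    hz_sup (hsup 0 (by omega) (by omega))
    (Set.mem_union_right _ (Set.mem_insert _ _)) ?_ ?_
  · rintro (hmem | hmem)
    · exact vV_not_mem_Fset f 0 _ hmem
    · rcases hmem with h | h | h
      · exact vV_ne' 0 (2*k) (by omega) (by omega) (by omega) h
      · exact vV_ne' 0 (k-1) (by omega) (by omega) (by omega) h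
      · exact vV_ne' 0 (2*k-1) (by omega) (by omega) (by omega) h
  · intro d hd hfst
    rcases hfst with ⟨w, hweq, hw⟩ | hfst
    · have hadj := d.adj
      rw [hweq] at hadj
      rcases adj_inr_elim f hadj with h | h | h
      · rw [hw, hend1x] at h
        exact Set.mem_union_right _ (by rw [h]; exact Set.mem_insert_of_mem _ (Set.mem_insert _ _))
      · rw [hw, hend2u] at h
        exact Set.mem_union_right _
          (by rw [h]; exact Set.mem_insert_of_mem _ (Set.mem_insert_of_mem _ rfl))
      · rw [hw] at h
        exact Set.mem_union_left _ h
    · rcases hfst with h | h | h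
      · rcases (hconfz d hd).1 h with h' | h'
        · exact Set.mem_union_right _ (by rw [h']; exact Set.mem_insert_of_mem _ (Set.mem_insert _ _))
        · exact Set.mem_union_right _
            (by rw [h']; exact Set.mem_insert_of_mem _ (Set.mem_insert_of_mem _ rfl))
      · rcases (hconfx d hd).1 h with h' | h'
        · exact Set.mem_union_left _ h'
        · exact Set.mem_union_right _ (by rw [h']; exact Set.mem_insert _ _)
      · rcases (hconfu d hd).1 h with h' | h'
        · exact Set.mem_union_left _ h'
        · exact Set.mem_union_right _ (by rw [h']; exact Set.mem_insert _ _)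
end Part9
section Part10
open SimpleGraph
variable {k : ℕ} {W : Type*} [Fintype W] [DecidableEq W] (h3 : 3 ≤ k) (f : W → HeavyIdx k)
variable {v0 : Fin (3*k+1) ⊕ W} {c : (pastedGk k f).Walk v0 v0}

lemma conf_partner {v t : Fin (3*k+1) ⊕ W} {S : Set (Fin (3*k+1) ⊕ W)}
    (hconf : Conf f c v S) {d : (pastedGk k f).Dart} (hd : d ∈ c.darts)
    (hor : (d.fst = v ∧ d.snd = t) ∨ (d.snd = v ∧ d.fst = t)) : t ∈ S := by
  rcases hor with ⟨h1, h2⟩ | ⟨h1, h2⟩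
  · exact h2 ▸ (hconf d hd).1 h1
  · exact h2 ▸ (hconf d hd).2 h1

include h3

lemma caseB (hc : c.IsCycle) (hfull : ∀ t, t ∈ c.support ↔ t ≠ vV k W (2*k))
    (hf : Function.Surjective f) : False := by
  have hM : (2*k : ℕ) = 2*k ∨ (2*k : ℕ) = 2*k+1 := Or.inl rfl
  have hsup : ∀ m, m ≤ 3*k → m ≠ 2*k → vV k W m ∈ c.support := fun m hm hne =>
    (hfull _).2 (vV_ne' _ _ (by omega) (by omega) hne)
  have hend1x : Sum.inl (heavyEnds k (eU k h3 (k-1))).1 = vV k W (k-1) :=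
    (vV_eq_end1_eU h3 (k-1) (by omega)).symm
  have hend2u : Sum.inl (heavyEnds k (eU k h3 (k-1))).2 = vV k W (2*k-1) := by
    rw [← vV_eq_end2_eU h3 (k-1) (by omega), show k+(k-1) = 2*k-1 from by omega]
  have hend1x2 : Sum.inl (heavyEnds k (eV k h3 (k-2))).1 = vV k W (k-2) :=
    (vV_eq_end1_eV h3 (k-2) (by omega)).symm
  have hend2v : Sum.inl (heavyEnds k (eV k h3 (k-2))).2 = vV k W (2*k+2) := by
    rw [← vV_eq_end2_eV h3 (k-2) (by omega), show 3*k-(k-2) = 2*k+2 from by omega]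
  have hend1x3 : Sum.inl (heavyEnds k (eU k h3 (k-2))).1 = vV k W (k-2) :=
    (vV_eq_end1_eU h3 (k-2) (by omega)).symm
  have hend2u2 : Sum.inl (heavyEnds k (eU k h3 (k-2))).2 = vV k W (2*k-2) := by
    rw [← vV_eq_end2_eU h3 (k-2) (by omega), show k+(k-2) = 2*k-2 from by omega]
  -- partners of v_k = vV (2k+1)
  have hconfvk : Conf f c (vV k W (2*k+1)) ({vV k W (k-1), vV k W (2*k+2)} : Set _) := by
    apply conf_intro
    intro d hd t hor hadj htsup
    rcases adj_vV_elim f (by omega) hadj with ⟨mb, hmb3k, ht, hmbne, hcase⟩ | ⟨w, ht, hends⟩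
    · have hne2k : mb ≠ 2*k := fun hmb => ((hfull _).1 htsup) (by rw [ht, hmb])
      have hcase3 : mb ≤ k-2 ∨ mb = k-1 ∨ mb = 2*k+2 := by omega
      rcases hcase3 with hmb | hmb | hmb
      · rw [ht] at hor
        exact absurd (partner_excluded f (conf_xj h3 f hc hM hfull hf mb hmb) hd hor
          (by rintro (hmem | hmem) <;> exact vV_not_mem_Fset f (2*k+1) _ hmem)) not_false
      · rw [hmb] at ht; rw [ht]; exact Set.mem_insert _ _
      · rw [hmb] at ht; rw [ht]; exact Set.mem_insert_of_mem _ rfl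
    · exfalso
      rcases hends with h1 | h2
      · have := end1_val_lt (k := k) (f w); omega
      · have := end2_val_range h3 (f w); omega
  have hvk_sup : vV k W (2*k+1) ∈ c.support := hsup (2*k+1) (by omega) (by omega)
  obtain ⟨hdv1e, hdv2e⟩ := force_two f hc (vV k W (2*k+1)) (vV k W (k-1)) (vV k W (2*k+2))
    hvk_sup (vV_ne' _ _ (by omega) (by omega) (by omega))
    (by
      intro d hd
      have := hconfvk d hd
      exact ⟨fun h1 => this.1 h1, fun h1 => this.2 h1⟩)
  obtain ⟨dv1, hdv1, hdv1p⟩ := hdv1e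
  obtain ⟨dv2, hdv2, hdv2p⟩ := hdv2e
  obtain ⟨dA, hdA, hdAp⟩ := (clique_side h3 f hc hM hfull hf (eU k h3 (k-1))).1
  rw [hend1x] at hdAp
  obtain ⟨dD, hdD, hdDp⟩ := (clique_side h3 f hc hM hfull hf (eV k h3 (k-2))).2
  rw [hend2v] at hdDp
  have hconfx : Conf f c (vV k W (k-1)) (Fset f (eU k h3 (k-1)) ∪ {vV k W (2*k+1)}) := by
    refine conf_of_pin f hc hdA hdv1 hdAp ?_ ?_
    · rcases hdv1p with ⟨a, b⟩ | ⟨a, b⟩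
      · exact Or.inr ⟨b, Set.mem_singleton_iff.2 a⟩
      · exact Or.inl ⟨b, Set.mem_singleton_iff.2 a⟩
    · rintro t ht rfl
      exact vV_not_mem_Fset f (2*k+1) _ ht
  have hconfv2 : Conf f c (vV k W (2*k+2)) (Fset f (eV k h3 (k-2)) ∪ {vV k W (2*k+1)}) := by
    refine conf_of_pin f hc hdD hdv2 hdDp ?_ ?_
    · rcases hdv2p with ⟨a, b⟩ | ⟨a, b⟩
      · exact Or.inr ⟨b, Set.mem_singleton_iff.2 a⟩
      · exact Or.inl ⟨b, Set.mem_singleton_iff.2 a⟩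
    · rintro t ht rfl
      exact vV_not_mem_Fset f (2*k+1) _ ht
  -- confinement of u_{k-1} = vV (2k-1)
  have hconfu : Conf f c (vV k W (2*k-1)) (Fset f (eU k h3 (k-1)) ∪ {vV k W (2*k-2)}) := by
    apply conf_intro
    intro d hd t hor hadj htsup
    rcases adj_vV_elim f (by omega) hadj with ⟨mb, hmb3k, ht, hmbne, hcase⟩ | ⟨w, ht, hends⟩
    · have hne2k : mb ≠ 2*k := fun hmb => ((hfull _).1 htsup) (by rw [ht, hmb])
      have hcase3 : mb ≤ k-2 ∨ mb = k-1 ∨ mb = 2*k-2 := by omega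
      rcases hcase3 with hmb | hmb | hmb
      · rw [ht] at hor
        exact absurd (partner_excluded f (conf_xj h3 f hc hM hfull hf mb hmb) hd hor
          (by rintro (hmem | hmem) <;> exact vV_not_mem_Fset f (2*k-1) _ hmem)) not_false
      · rw [hmb] at ht
        rw [ht] at hor
        exfalso
        refine partner_excluded f hconfx hd hor ?_
        rintro (hmem | hmem)
        · exact vV_not_mem_Fset f (2*k-1) _ hmem
        · exact vV_ne' (2*k-1) (2*k+1) (by omega) (by omega) (by omega) hmem
      · rw [hmb] at ht; rw [ht]
        exact Set.mem_union_right _ rfl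
    · rcases hends with h1 | h2
      · exfalso; have := end1_val_lt (k := k) (f w); omega
      · rcases end2_val_cases h3 (f w) with ⟨i, hik, hei, hval⟩ | ⟨i, hik, hei, hval⟩
        · have hik1 : i = k-1 := by omega
          rw [hik1] at hei
          exact Set.mem_union_left _ ⟨w, ht, hei⟩
        · exfalso; omega
  -- confinement of u_{k-2} = vV (2k-2)
  have hconfu2 : Conf f c (vV k W (2*k-2))
      (Fset f (eU k h3 (k-2)) ∪ {vV k W (2*k-3), vV k W (2*k-1)}) := by
    apply conf_intro
    intro d hd t hor hadj htsup
    rcases adj_vV_elim f (by omega) hadj with ⟨mb, hmb3k, ht, hmbne, hcase⟩ | ⟨w, ht, hends⟩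
    · have hne2k : mb ≠ 2*k := fun hmb => ((hfull _).1 htsup) (by rw [ht, hmb])
      have hcase3 : mb ≤ k-2 ∨ mb = k-1 ∨ mb = 2*k-3 ∨ mb = 2*k-1 := by omega
      rcases hcase3 with hmb | hmb | hmb | hmb
      · rw [ht] at hor
        exact absurd (partner_excluded f (conf_xj h3 f hc hM hfull hf mb hmb) hd hor
          (by rintro (hmem | hmem) <;> exact vV_not_mem_Fset f (2*k-2) _ hmem)) not_false
      · rw [hmb] at ht
        rw [ht] at hor
        exfalso
        refine partner_excluded f hconfx hd hor ?_
        rintro (hmem | hmem)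
        · exact vV_not_mem_Fset f (2*k-2) _ hmem
        · exact vV_ne' (2*k-2) (2*k+1) (by omega) (by omega) (by omega) hmem
      · rw [hmb] at ht; rw [ht]
        exact Set.mem_union_right _ (Set.mem_insert _ _)
      · rw [hmb] at ht; rw [ht]
        exact Set.mem_union_right _ (Set.mem_insert_of_mem _ rfl)
    · rcases hends with h1 | h2
      · exfalso; have := end1_val_lt (k := k) (f w); omega
      · rcases end2_val_cases h3 (f w) with ⟨i, hik, hei, hval⟩ | ⟨i, hik, hei, hval⟩
        · have hik1 : i = k-2 := by omega
          rw [hik1] at hei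
          exact Set.mem_union_left _ ⟨w, ht, hei⟩
        · exfalso; omega
  -- the two-crossing contradiction on B
  set B : Set (Fin (3*k+1) ⊕ W) := Fset f (eU k h3 (k-1)) ∪ (Fset f (eV k h3 (k-2)) ∪
    (Fset f (eU k h3 (k-2)) ∪
      {vV k W (k-2), vV k W (k-1), vV k W (2*k+1), vV k W (2*k+2),
        vV k W (2*k-1), vV k W (2*k-2)})) with hB
  have hxB : vV k W (2*k+1) ∈ B := by
    rw [hB]
    exact Set.mem_union_right _ (Set.mem_union_right _ (Set.mem_union_right _
      (Set.mem_insert_of_mem _ (Set.mem_insert_of_mem _ (Set.mem_insert _ _)))))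
  have hyB : vV k W 0 ∉ B := by
    rw [hB]
    rintro (hmem | hmem | hmem | hmem)
    · exact vV_not_mem_Fset f 0 _ hmem
    · exact vV_not_mem_Fset f 0 _ hmem
    · exact vV_not_mem_Fset f 0 _ hmem
    · simp only [Set.mem_insert_iff, Set.mem_singleton_iff] at hmem
      rcases hmem with h | h | h | h | h | h
      · exact vV_ne' 0 (k-2) (by omega) (by omega) (by omega) h
      · exact vV_ne' 0 (k-1) (by omega) (by omega) (by omega) h
      · exact vV_ne' 0 (2*k+1) (by omega) (by omega) (by omega) h
      · exact vV_ne' 0 (2*k+2) (by omega) (by omega) (by omega) h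
      · exact vV_ne' 0 (2*k-1) (by omega) (by omega) (by omega) h
      · exact vV_ne' 0 (2*k-2) (by omega) (by omega) (by omega) h
  -- the only possible crossing pair
  have hkey : ∀ d ∈ c.darts, ∀ u t : Fin (3*k+1) ⊕ W,
      ((d.fst = u ∧ d.snd = t) ∨ (d.snd = u ∧ d.fst = t)) → u ∈ B → t ∉ B →
      (u = vV k W (2*k-2) ∧ t = vV k W (2*k-3)) := by
    intro d hd u t hor huB htB
    have hBsub1 : Fset f (eU k h3 (k-1)) ⊆ B := by rw [hB]; exact Set.subset_union_left
    have hBsub2 : Fset f (eV k h3 (k-2)) ⊆ B := by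
      rw [hB]; exact Set.subset_union_of_subset_right Set.subset_union_left _
    have hBsub3 : Fset f (eU k h3 (k-2)) ⊆ B := by
      rw [hB]
      exact Set.subset_union_of_subset_right
        (Set.subset_union_of_subset_right Set.subset_union_left _) _
    have hmemB : ∀ m, (m = k-2 ∨ m = k-1 ∨ m = 2*k+1 ∨ m = 2*k+2 ∨ m = 2*k-1 ∨ m = 2*k-2) →
        vV k W m ∈ B := by
      intro m hm
      rw [hB]
      refine Set.mem_union_right _ (Set.mem_union_right _ (Set.mem_union_right _ ?_))
      simp only [Set.mem_insert_iff, Set.mem_singleton_iff]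
      rcases hm with rfl | rfl | rfl | rfl | rfl | rfl
      · exact Or.inl rfl
      · exact Or.inr (Or.inl rfl)
      · exact Or.inr (Or.inr (Or.inl rfl))
      · exact Or.inr (Or.inr (Or.inr (Or.inl rfl)))
      · exact Or.inr (Or.inr (Or.inr (Or.inr (Or.inl rfl))))
      · exact Or.inr (Or.inr (Or.inr (Or.inr (Or.inr rfl))))
    rw [hB] at huB
    rcases huB with hu | hu | hu | hu
    · -- u in clique of e* : partner stays in B
      exfalso
      obtain ⟨w, hweq, hw⟩ := hu
      have hadj : (pastedGk k f).Adj (Sum.inr w) t := by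
        rcases hor with ⟨h1, h2⟩ | ⟨h1, h2⟩
        · rw [← h2]; rw [hweq] at h1; exact h1 ▸ d.adj
        · rw [← h2]; rw [hweq] at h1; exact h1 ▸ d.adj.symm
      rcases adj_inr_elim f hadj with h | h | h
      · rw [hw, hend1x] at h; exact htB (h ▸ hmemB (k-1) (by omega))
      · rw [hw, hend2u] at h; exact htB (h ▸ hmemB (2*k-1) (by omega))
      · rw [hw] at h; exact htB (hBsub1 h)
    · exfalso
      obtain ⟨w, hweq, hw⟩ := hu
      have hadj : (pastedGk k f).Adj (Sum.inr w) t := by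
        rcases hor with ⟨h1, h2⟩ | ⟨h1, h2⟩
        · rw [← h2]; rw [hweq] at h1; exact h1 ▸ d.adj
        · rw [← h2]; rw [hweq] at h1; exact h1 ▸ d.adj.symm
      rcases adj_inr_elim f hadj with h | h | h
      · rw [hw, hend1x2] at h; exact htB (h ▸ hmemB (k-2) (by omega))
      · rw [hw, hend2v] at h; exact htB (h ▸ hmemB (2*k+2) (by omega))
      · rw [hw] at h; exact htB (hBsub2 h)
    · exfalso
      obtain ⟨w, hweq, hw⟩ := hu
      have hadj : (pastedGk k f).Adj (Sum.inr w) t := by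
        rcases hor with ⟨h1, h2⟩ | ⟨h1, h2⟩
        · rw [← h2]; rw [hweq] at h1; exact h1 ▸ d.adj
        · rw [← h2]; rw [hweq] at h1; exact h1 ▸ d.adj.symm
      rcases adj_inr_elim f hadj with h | h | h
      · rw [hw, hend1x3] at h; exact htB (h ▸ hmemB (k-2) (by omega))
      · rw [hw, hend2u2] at h; exact htB (h ▸ hmemB (2*k-2) (by omega))
      · rw [hw] at h; exact htB (hBsub3 h)
    · simp only [Set.mem_insert_iff, Set.mem_singleton_iff] at hu
      rcases hu with rfl | rfl | rfl | rfl | rfl | rfl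
      · -- u = x_{k-2}
        exfalso
        have := conf_partner f (conf_xj h3 f hc hM hfull hf (k-2) (by omega)) hd hor
        rcases this with hh | hh
        · exact htB (hBsub3 hh)
        · exact htB (hBsub2 hh)
      · exfalso
        have := conf_partner f hconfx hd hor
        rcases this with hh | hh
        · exact htB (hBsub1 hh)
        · exact htB (hh ▸ hmemB (2*k+1) (by omega))
      · exfalso
        have := conf_partner f hconfvk hd hor
        rcases this with hh | hh
        · exact htB (hh ▸ hmemB (k-1) (by omega))
        · exact htB (hh ▸ hmemB (2*k+2) (by omega))
      · exfalso
        have := conf_partner f hconfv2 hd hor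
        rcases this with hh | hh
        · exact htB (hBsub2 hh)
        · exact htB (hh ▸ hmemB (2*k+1) (by omega))
      · exfalso
        have := conf_partner f hconfu hd hor
        rcases this with hh | hh
        · exact htB (hBsub1 hh)
        · exact htB (hh ▸ hmemB (2*k-2) (by omega))
      · have := conf_partner f hconfu2 hd hor
        rcases this with hh | hh
        · exact absurd (hBsub3 hh) htB
        · rcases hh with hh | hh
          · exact ⟨rfl, hh⟩
          · exact absurd (hh ▸ hmemB (2*k-1) (by omega)) htB
  obtain ⟨d1, hd1, d2, hd2, ⟨hd1f, hd1s⟩, ⟨hd2f, hd2s⟩, hedge⟩ :=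
    CEaux.cycle_two_cross hc B hvk_sup (hsup 0 (by omega) (by omega)) hxB hyB
  obtain ⟨he1f, he1s⟩ := hkey d1 hd1 d1.fst d1.snd (Or.inl ⟨rfl, rfl⟩) hd1f hd1s
  obtain ⟨he2s, he2f⟩ := hkey d2 hd2 d2.snd d2.fst (Or.inr ⟨rfl, rfl⟩) hd2s hd2f
  apply hedge
  have hp1 : d1.toProd = (vV k W (2*k-2), vV k W (2*k-3)) := by
    rw [← he1f, ← he1s]
  have hp2 : d2.toProd = (vV k W (2*k-3), vV k W (2*k-2)) := by
    rw [← he2f, ← he2s]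
  show s(d1.toProd.1, d1.toProd.2) = s(d2.toProd.1, d2.toProd.2)
  rw [hp1, hp2]
  exact Sym2.eq_swap
end Part10
section Part11
open SimpleGraph
variable {k : ℕ} {W : Type*} [Fintype W] [DecidableEq W] (h3 : 3 ≤ k) (f : W → HeavyIdx k)

include h3

lemma not_cycleExtendible (hf : Function.Surjective f) :
    ¬ CycleExtendible (pastedGk k f) := by
  intro hce
  obtain ⟨p, hp, hsupC⟩ := exists_cycC h3 f
  have hZcard : ({vV k W (2*k), vV k W (2*k+1)} : Finset (Fin (3*k+1) ⊕ W)).card = 2 := by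
    rw [Finset.card_insert_of_notMem (by
      simp only [Finset.mem_singleton]
      exact vV_ne' (2*k) (2*k+1) (by omega) (by omega) (by omega)), Finset.card_singleton]
  have hnotuniv : p.support.toFinset ≠ Finset.univ := by
    rw [hsupC]
    intro h
    have h2 : vV k W (2*k) ∈ Finset.univ \
        ({vV k W (2*k), vV k W (2*k+1)} : Finset (Fin (3*k+1) ⊕ W)) := by
      rw [h]; exact Finset.mem_univ _
    rw [Finset.mem_sdiff] at h2
    exact h2.2 (Finset.mem_insert_self _ _)
  obtain ⟨b, c', hc'cyc, hsub, hcard⟩ := hce _ p hp hnotuniv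
  have hTuniv : c'.support.toFinset ⊆ Finset.univ := Finset.subset_univ _
  have hScard : p.support.toFinset.card = Fintype.card (Fin (3*k+1) ⊕ W) - 2 := by
    rw [hsupC, Finset.card_sdiff_of_subset (Finset.subset_univ _), Finset.card_univ, hZcard]
  have hcompl_card : (Finset.univ \ c'.support.toFinset).card = 1 := by
    rw [Finset.card_sdiff_of_subset hTuniv, Finset.card_univ, hcard, hScard]
    have : 2 ≤ Fintype.card (Fin (3*k+1) ⊕ W) := by
      rw [card_VT]; omega
    omega
  obtain ⟨t0, ht0⟩ := Finset.card_eq_one.1 hcompl_card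
  have ht0Z : t0 ∈ ({vV k W (2*k), vV k W (2*k+1)} : Finset (Fin (3*k+1) ⊕ W)) := by
    have hsubZ : Finset.univ \ c'.support.toFinset ⊆
        ({vV k W (2*k), vV k W (2*k+1)} : Finset (Fin (3*k+1) ⊕ W)) := by
      intro x hx
      rw [Finset.mem_sdiff] at hx
      by_contra hxZ
      have hxS : x ∈ p.support.toFinset := by
        rw [hsupC, Finset.mem_sdiff]
        exact ⟨Finset.mem_univ _, hxZ⟩
      exact hx.2 (hsub.1 hxS)
    have := hsubZ (by rw [ht0]; exact Finset.mem_singleton_self t0)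
    exact this
  have hT : c'.support.toFinset = Finset.univ \ {t0} := by
    have h1 : Finset.univ \ (Finset.univ \ c'.support.toFinset) = c'.support.toFinset := by
      rw [Finset.sdiff_sdiff_self_left, Finset.univ_inter]
    rw [← h1, ht0]
  have hfull : ∀ t, t ∈ c'.support ↔ t ≠ t0 := by
    intro t
    rw [← List.mem_toFinset, hT, Finset.mem_sdiff, Finset.mem_singleton]
    constructor
    · exact fun h => h.2
    · exact fun h => ⟨Finset.mem_univ _, h⟩
  rcases Finset.mem_insert.1 ht0Z with rfl | ht0'
  · exact caseB h3 f hc'cyc hfull hf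
  · rcases Finset.mem_singleton.1 ht0' with rfl
    exact caseA h3 f hc'cyc hfull hf
end Part11

/-- stmt5 -/
theorem stmt5 (k : ℕ) (hk : 3 ≤ k) {W : Type*} [Fintype W] [DecidableEq W]
    (f : W → HeavyIdx k) (hf : Function.Surjective f) :
    (pastedGk k f).IsHamiltonian ∧ ¬ CycleExtendible (pastedGk k f) := by
  exact ⟨pasted_isHamiltonian hk f, not_cycleExtendible hk f hf⟩
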